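/- arXiv:2506.02984 — 5 statements merged into one kernel-verified Lean document; each statement's English description precedes it below -/
import Mathlib

section
/- Let K_0 ⊇ K_1 ⊇ K_2 ⊇ ⋯ be a descending chain of simplexes contained in the standard n-dimensional simplex Δ ⊂ ℝ^{n+1} (each K_t being the convex hull of a finite affinely independent set of points of Δ). Then the intersection K = ∩_{t≥0} K_t is itself a simplex, i.e., the convex hull of a finite affinely independent set of points. -/
open Matrix

abbrev MatZ (n : ℕ) : Type := Matrix (Fin (n + 1)) (Fin (n + 1)) ℤ

def inSigma {n : ℕ} (A : MatZ n) : Prop :=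
  IsUnit A.det ∧ ∀ i j, 0 ≤ A i j

def IsPermMat {n : ℕ} (A : MatZ n) : Prop :=
  ∃ σ : Equiv.Perm (Fin (n + 1)), ∀ i j, A i j = if i = σ j then 1 else 0

noncomputable def toR {n : ℕ} (A : MatZ n) : Matrix (Fin (n + 1)) (Fin (n + 1)) ℝ :=
  A.map ((↑) : ℤ → ℝ)

noncomputable def projAct {n : ℕ} (A : Matrix (Fin (n + 1)) (Fin (n + 1)) ℝ)
    (x : Fin (n + 1) → ℝ) : Fin (n + 1) → ℝ :=
  (∑ i, (A *ᵥ x) i)⁻¹ • (A *ᵥ x)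

noncomputable def simg {n : ℕ} (A : MatZ n) : Set (Fin (n + 1) → ℝ) :=
  projAct (toR A) '' stdSimplex ℝ (Fin (n + 1))

def wordProd {n : ℕ} (A0 A1 : MatZ n) (w : List Bool) : MatZ n :=
  (w.map (fun b => bif b then A1 else A0)).prod

def Contractive {n : ℕ} (A0 A1 : MatZ n) : Prop :=
  ∀ a : ℕ → Bool, ∃ p,
    (⋂ t : ℕ, simg (wordProd A0 A1 ((List.range t).map a))) = {p}

def Nmat (n : ℕ) : MatZ n :=
  Matrix.of fun i j => if i = j then 1 else if j = 1 ∧ i = 0 then 1 else 0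

def Fmat (n : ℕ) : MatZ n :=
  Matrix.of fun i j => if i = Equiv.swap (0 : Fin (n + 1)) 1 j then 1 else 0

def Rmat (n : ℕ) : MatZ n :=
  Matrix.of fun i j => if i = j + 1 then 1 else 0

def Lmat (n : ℕ) : MatZ n := Fmat n * Nmat n * Fmat n

def Mon0 (n : ℕ) : MatZ n := Nmat n * Fmat n * Rmat n

def Mon1 (n : ℕ) : MatZ n := Lmat n * Rmat n

def permMat {n : ℕ} (σ : Equiv.Perm (Fin (n + 1))) : MatZ n :=
  Matrix.of fun i j => if i = σ j then 1 else 0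

def IsSimplex {n : ℕ} (S : Set (Fin (n + 1) → ℝ)) : Prop :=
  ∃ V : Finset (Fin (n + 1) → ℝ),
    AffineIndependent ℝ (fun v : V => (v : Fin (n + 1) → ℝ)) ∧
    S = convexHull ℝ (V : Set (Fin (n + 1) → ℝ))


open Filter Topology

section Aux
variable {E : Type*} [AddCommGroup E] [Module ℝ E] [DecidableEq E]

/-- If `p ∈ V0` is not in the hull of `V0.erase p`, then any convex representation of `p`
by points of the hull of `V0` is supported on copies of `p`. -/
lemma repr_support_lemma {m : ℕ} (V0 : Finset E) {p : E} (hp : p ∈ V0)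
    (hpe : p ∉ convexHull ℝ (↑(V0.erase p) : Set E))
    (lam : Fin m → ℝ) (hl0 : ∀ i, 0 ≤ lam i) (hl1 : ∑ i, lam i = 1)
    (y : Fin m → E) (hy : ∀ i, y i ∈ convexHull ℝ (V0 : Set E))
    (hrep : ∑ i, lam i • y i = p) :
    ∀ i, lam i ≠ 0 → y i = p := by
  by_contra hcon
  push_neg at hcon
  obtain ⟨i0, hi0, hyi0⟩ := hcon
  have hi0pos : 0 < lam i0 := lt_of_le_of_ne (hl0 i0) (Ne.symm hi0)
  choose nu hnu0 hnu1 hnu2 using fun i => Finset.mem_convexHull'.1 (hy i)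
  set g : E → ℝ := fun q => ∑ i, lam i * nu i q with hg
  have hg0 : ∀ q ∈ V0, 0 ≤ g q := fun q hq =>
    Finset.sum_nonneg fun i _ => mul_nonneg (hl0 i) (hnu0 i q hq)
  have hgsum : ∑ q ∈ V0, g q = 1 := by
    rw [Finset.sum_comm]
    simp_rw [← Finset.mul_sum]
    simp_rw [hnu1]
    simpa using hl1
  have hgvec : ∑ q ∈ V0, g q • q = p := by
    calc ∑ q ∈ V0, g q • q = ∑ q ∈ V0, ∑ i, (lam i * nu i q) • q := by
          simp [hg, Finset.sum_smul]
      _ = ∑ i, ∑ q ∈ V0, (lam i * nu i q) • q := Finset.sum_comm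
      _ = ∑ i, lam i • ∑ q ∈ V0, nu i q • q := by
          simp [Finset.smul_sum, mul_smul]
      _ = p := by simp_rw [hnu2]; exact hrep
  have hnup_le : ∀ i, nu i p ≤ 1 := by
    intro i
    rw [← hnu1 i]
    exact Finset.single_le_sum (fun q hq => hnu0 i q hq) hp
  have hnui0 : nu i0 p < 1 := by
    rcases lt_or_eq_of_le (hnup_le i0) with h | h
    · exact h
    · exfalso
      apply hyi0
      have hrest : ∑ q ∈ V0.erase p, nu i0 q = 0 := by
        have := Finset.add_sum_erase V0 (nu i0) hp
        rw [hnu1 i0] at this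
        linarith [this, h]
      have hz : ∀ q ∈ V0.erase p, nu i0 q = 0 := by
        intro q hq
        exact (Finset.sum_eq_zero_iff_of_nonneg
          (fun q hq => hnu0 i0 q (Finset.mem_of_mem_erase hq))).1 hrest q hq
      rw [← hnu2 i0, ← Finset.add_sum_erase V0 _ hp, h]
      rw [Finset.sum_eq_zero fun q hq => by rw [hz q hq, zero_smul]]
      simp
  have hgp : g p < 1 := by
    have : g p < ∑ i, lam i := by
      apply Finset.sum_lt_sum (fun i _ => mul_le_of_le_one_right (hl0 i) (hnup_le i))
      exact ⟨i0, Finset.mem_univ i0, by nlinarith [hnup_le i0]⟩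
    rwa [hl1] at this
  apply hpe
  rw [Finset.mem_convexHull']
  refine ⟨fun q => (1 - g p)⁻¹ * g q, ?_, ?_, ?_⟩
  · intro q hq
    exact mul_nonneg (inv_nonneg.2 (by linarith)) (hg0 q (Finset.mem_of_mem_erase hq))
  · rw [← Finset.mul_sum, Finset.sum_erase_eq_sub hp, hgsum]
    exact inv_mul_cancel₀ (ne_of_gt (by linarith : (0:ℝ) < 1 - g p))
  · have : ∑ q ∈ V0.erase p, (((1 - g p)⁻¹ * g q) • q) =
        (1 - g p)⁻¹ • ∑ q ∈ V0.erase p, g q • q := by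
      rw [Finset.smul_sum]; simp_rw [mul_smul]
    rw [this, Finset.sum_erase_eq_sub hp, hgvec,
      show p - g p • p = ((1:ℝ) - g p) • p by rw [sub_smul, one_smul], smul_smul,
      inv_mul_cancel₀ (by linarith : (1:ℝ) - g p ≠ 0), one_smul]

/-- Every finite set has a subset with the same convex hull, minimal in the sense that
no element is in the hull of the others. -/
lemma exists_minimal_hull (W : Finset E) :
    ∃ V0 : Finset E, V0 ⊆ W ∧ convexHull ℝ (V0 : Set E) = convexHull ℝ (W : Set E) ∧
      ∀ p ∈ V0, p ∉ convexHull ℝ (↑(V0.erase p) : Set E) := by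
  induction W using Finset.strongInduction with
  | _ W ih =>
    by_cases h : ∃ p ∈ W, p ∈ convexHull ℝ (↑(W.erase p) : Set E)
    · obtain ⟨p, hpW, hp⟩ := h
      obtain ⟨V0, hsub, heq, hmin⟩ := ih (W.erase p) (Finset.erase_ssubset hpW)
      refine ⟨V0, hsub.trans (Finset.erase_subset _ _), ?_, hmin⟩
      rw [heq]
      refine le_antisymm (convexHull_mono (by simp [Finset.coe_subset, Finset.erase_subset])) ?_
      refine convexHull_min ?_ (convex_convexHull ℝ _)
      intro q hq
      by_cases hqp : q = p
      · rw [hqp]; exact hp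
      · exact subset_convexHull ℝ _ (by
          simp only [Finset.coe_erase, Set.mem_diff, Set.mem_singleton_iff]
          exact ⟨hq, hqp⟩)
    · push_neg at h
      exact ⟨W, subset_rfl, rfl, h⟩

end Aux

section Helpers
open Filter Topology

lemma ulim_exists (𝒰 : Ultrafilter ℕ) (f : ℕ → ℝ)
    (h : ∀ᶠ t in (𝒰 : Filter ℕ), f t ∈ Set.Icc (0:ℝ) 1) :
    ∃ l, Filter.Tendsto f (𝒰 : Filter ℕ) (nhds l) := by
  obtain ⟨a, -, ha⟩ := isCompact_Icc.ultrafilter_le_nhds (𝒰.map f)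
    (by rwa [Ultrafilter.coe_map, Filter.le_principal_iff, Filter.mem_map])
  exact ⟨a, ha⟩

lemma ulim_eq {α} [TopologicalSpace α] [T2Space α] {𝒰 : Ultrafilter ℕ} {f : ℕ → α} {a b : α}
    (hf : Filter.Tendsto f (𝒰 : Filter ℕ) (nhds a))
    (hev : ∀ᶠ t in (𝒰 : Filter ℕ), f t = b) : a = b :=
  tendsto_nhds_unique hf (tendsto_const_nhds.congr' (hev.mono fun _ ht => ht.symm))

lemma sum_finset_enum {E α : Type*} [DecidableEq E] [AddCommMonoid α] {m : ℕ} (V : Finset E)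
    (v : Fin m → E) (hinj : Function.Injective v) (hmem : ∀ i, v i ∈ V)
    (hcard : V.card = m) (f : E → α) : ∑ i, f (v i) = ∑ q ∈ V, f q := by
  have himg : Finset.image v Finset.univ = V := by
    apply Finset.eq_of_subset_of_card_le
    · intro q hq
      obtain ⟨i, -, rfl⟩ := Finset.mem_image.1 hq
      exact hmem i
    · rw [Finset.card_image_of_injective _ hinj, Finset.card_univ, Fintype.card_fin, hcard]
  rw [← himg, Finset.sum_image (fun a _ b _ h => hinj h)]

end Helpers

open Filter Topology

theorem stmt0 (n : ℕ) (hn : 1 ≤ n) (K : ℕ → Set (Fin (n + 1) → ℝ))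
    (hdesc : ∀ t, K (t + 1) ⊆ K t)
    (hsub : ∀ t, K t ⊆ stdSimplex ℝ (Fin (n + 1)))
    (hsimp : ∀ t, IsSimplex (K t)) :
    IsSimplex (⋂ t, K t) := by
  classical
  choose V hVa hVe using hsimp
  have hmono : ∀ {t s : ℕ}, t ≤ s → K s ⊆ K t := fun {t s} h =>
    antitone_nat_of_succ_le (fun k => hdesc k) h
  have hKclosed : ∀ t, IsClosed (K t) := fun t => by
    rw [hVe t]; exact ((V t).finite_toSet.isCompact_convexHull (𝕜 := ℝ)).isClosed
  -- cardinality bound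
  have hcard : ∀ t, (V t).card ≤ n + 2 := by
    intro t
    have h1 := (hVa t).card_le_finrank_succ
    rw [Fintype.card_coe] at h1
    refine h1.trans ?_
    have h2 := Submodule.finrank_le
      (vectorSpan ℝ (Set.range (fun v : (V t) => (v : Fin (n+1) → ℝ))))
    rw [Module.finrank_fin_fun] at h2
    omega
  -- ultrafilter
  obtain ⟨𝒰, h𝒰⟩ := Ultrafilter.exists_le (atTop : Filter ℕ)
  have hU_atTop : ∀ t0 : ℕ, ∀ᶠ t in (𝒰 : Filter ℕ), t0 ≤ t := fun t0 =>
    h𝒰 (eventually_ge_atTop t0)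
  have hcover : (⋃ k ∈ Set.Iic (n+2), {t : ℕ | (V t).card = k}) ∈ 𝒰 := by
    have h : (⋃ k ∈ Set.Iic (n+2), {t : ℕ | (V t).card = k}) = Set.univ := by
      ext t
      simp only [Set.mem_iUnion, Set.mem_setOf_eq, Set.mem_univ, iff_true, Set.mem_Iic]
      exact ⟨(V t).card, hcard t, rfl⟩
    rw [h]; exact Filter.univ_mem
  obtain ⟨m, -, hmA⟩ := (Ultrafilter.finite_biUnion_mem_iff (Set.finite_Iic _)).1 hcover
  have hAev : ∀ᶠ t in (𝒰 : Filter ℕ), (V t).card = m := hmA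
  -- vertex enumeration
  set v : ℕ → Fin m → (Fin (n+1) → ℝ) := fun t i =>
    if h : (V t).card = m then ((V t).equivFin.symm (Fin.cast h.symm i) : _) else 0 with hvdef
  have hvmemV : ∀ t, (V t).card = m → ∀ i, v t i ∈ V t := by
    intro t h i
    simp only [hvdef, dif_pos h]
    exact Subtype.coe_prop _
  have hvinj : ∀ t, (V t).card = m → Function.Injective (v t) := by
    intro t h a b hab
    simp only [hvdef, dif_pos h] at hab
    have := Subtype.coe_injective hab
    have := (V t).equivFin.symm.injective this
    simpa [Fin.ext_iff] using this
  have hvAI : ∀ t, (V t).card = m → AffineIndependent ℝ (v t) := by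
    intro t h
    have hAI' := (affineIndependent_equiv ((finCongr h.symm).trans (V t).equivFin.symm)).2 (hVa t)
    have hve : v t = (fun x : (V t) => (x : Fin (n+1) → ℝ)) ∘
        ((finCongr h.symm).trans (V t).equivFin.symm) := by
      funext i
      simp only [hvdef, dif_pos h, Function.comp_apply, Equiv.trans_apply, finCongr_apply]
    rw [hve]
    exact hAI'
  have hvK : ∀ t, (V t).card = m → ∀ i, v t i ∈ K t := by
    intro t h i
    rw [hVe t]
    exact subset_convexHull ℝ _ (hvmemV t h i)
  have hstd01 : ∀ x ∈ stdSimplex ℝ (Fin (n+1)), ∀ j, x j ∈ Set.Icc (0:ℝ) 1 := by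
    intro x hx j
    obtain ⟨h1, h2⟩ := hx
    exact ⟨h1 j, by rw [← h2]; exact Finset.single_le_sum (fun k _ => h1 k) (Finset.mem_univ j)⟩
  -- limits of vertices
  have hwex : ∀ (i : Fin m) (j : Fin (n+1)), ∃ l, Tendsto (fun t => v t i j) (𝒰:Filter ℕ) (𝓝 l) := by
    intro i j
    apply ulim_exists
    filter_upwards [hAev] with t ht
    exact hstd01 _ (hsub t (hvK t ht i)) j
  choose w0 hw0 using hwex
  set w : Fin m → (Fin (n+1) → ℝ) := w0 with hwdef
  have hw : ∀ i, Tendsto (fun t => v t i) (𝒰:Filter ℕ) (𝓝 (w i)) := fun i =>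
    tendsto_pi_nhds.2 (hw0 i)
  have hwK : ∀ (i : Fin m) (t0 : ℕ), w i ∈ K t0 := by
    intro i t0
    apply (hKclosed t0).mem_of_tendsto (hw i)
    filter_upwards [hAev, hU_atTop t0] with t ht hle
    exact hmono hle (hvK t ht i)
  set W0 : Finset (Fin (n+1) → ℝ) := Finset.image w Finset.univ with hW0def
  have hwW0hull : ∀ i, w i ∈ convexHull ℝ (W0 : Set (Fin (n+1) → ℝ)) := fun i =>
    subset_convexHull ℝ _ (Finset.mem_coe.2 (Finset.mem_image.2 ⟨i, Finset.mem_univ i, rfl⟩))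
  -- the intersection equals the hull of W0
  have hIsect : (⋂ t, K t) = convexHull ℝ (W0 : Set (Fin (n+1) → ℝ)) := by
    apply le_antisymm
    · intro x hx
      have hlamex : ∀ t, ∃ lam : Fin m → ℝ, (V t).card = m →
          ((∀ i, 0 ≤ lam i) ∧ ∑ i, lam i = 1 ∧ ∑ i, lam i • v t i = x) := by
        intro t
        by_cases ht : (V t).card = m
        · have hxt : x ∈ convexHull ℝ ((V t : Set (Fin (n+1) → ℝ))) := by
            rw [← hVe t]; exact Set.mem_iInter.1 hx t
          obtain ⟨μ, hμ0, hμ1, hμ2⟩ := Finset.mem_convexHull'.1 hxt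
          refine ⟨fun i => μ (v t i), fun _ => ⟨fun i => hμ0 _ (hvmemV t ht i), ?_, ?_⟩⟩
          · rw [sum_finset_enum (V t) (v t) (hvinj t ht) (hvmemV t ht) ht μ]; exact hμ1
          · rw [sum_finset_enum (V t) (v t) (hvinj t ht) (hvmemV t ht) ht (fun q => μ q • q)]
            exact hμ2
        · exact ⟨0, fun h => absurd h ht⟩
      choose lam hlam using hlamex
      have hlamlimex : ∀ i, ∃ l, Tendsto (fun t => lam t i) (𝒰:Filter ℕ) (𝓝 l) := by
        intro i
        apply ulim_exists
        filter_upwards [hAev] with t ht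
        refine ⟨(hlam t ht).1 i, ?_⟩
        rw [← (hlam t ht).2.1]
        exact Finset.single_le_sum (fun k _ => (hlam t ht).1 k) (Finset.mem_univ i)
      choose lamL hlamL using hlamlimex
      have hsum1 : ∑ i, lamL i = 1 := by
        refine ulim_eq (tendsto_finset_sum _ (fun i _ => hlamL i)) ?_
        filter_upwards [hAev] with t ht
        exact (hlam t ht).2.1
      have hxeq : ∑ i, lamL i • w i = x := by
        refine ulim_eq (tendsto_finset_sum _ (fun i _ => (hlamL i).smul (hw i))) ?_
        filter_upwards [hAev] with t ht
        exact (hlam t ht).2.2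
      rw [← hxeq]
      exact (convex_convexHull ℝ _).sum_mem
        (fun i _ => ge_of_tendsto (hlamL i) (by
          filter_upwards [hAev] with t ht
          exact (hlam t ht).1 i))
        hsum1 (fun i _ => hwW0hull i)
    · refine convexHull_min ?_ (convex_iInter (fun t => by
        rw [hVe t]; exact convex_convexHull ℝ _))
      intro q hq
      obtain ⟨i, -, rfl⟩ := Finset.mem_image.1 hq
      exact Set.mem_iInter.2 (hwK i)
  -- minimal spanning subset
  obtain ⟨V0, hV0sub, hV0eq, hV0min⟩ := exists_minimal_hull W0
  refine ⟨V0, ?_, by rw [hIsect, hV0eq]⟩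
  by_contra hAI
  rw [affineIndependent_iff] at hAI
  push_neg at hAI
  obtain ⟨s, d, hd0, hdvec, e0, he0s, hde0⟩ := hAI
  -- a section of w over V0
  have hr : ∀ e : {x // x ∈ V0}, ∃ i : Fin m, w i = (e : Fin (n+1) → ℝ) := by
    intro e
    have he : (e : Fin (n+1) → ℝ) ∈ W0 := hV0sub e.2
    obtain ⟨i, -, hi⟩ := Finset.mem_image.1 he
    exact ⟨i, hi⟩
  choose r hrw using hr
  have hrinj : Function.Injective r := fun a b hab =>
    Subtype.ext (by rw [← hrw a, ← hrw b, hab])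
  set c : Fin m → ℝ := fun i => ∑ e ∈ s, if r e = i then d e else 0 with hcdef
  have hc0 : ∑ i, c i = 0 := by
    rw [hcdef]
    rw [Finset.sum_comm]
    have : ∀ e ∈ s, (∑ i : Fin m, if r e = i then d e else 0) = d e := by
      intro e _
      simp [Finset.sum_ite_eq]
    rw [Finset.sum_congr rfl this, hd0]
  have hcvec : ∑ i, c i • w i = 0 := by
    have h1 : ∀ i : Fin m, c i • w i = ∑ e ∈ s, (if r e = i then d e • w i else 0) := by
      intro i
      rw [hcdef]
      rw [Finset.sum_smul]
      exact Finset.sum_congr rfl (fun e _ => by split <;> simp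
        )
    simp_rw [h1]
    rw [Finset.sum_comm]
    have h2 : ∀ e ∈ s, (∑ i : Fin m, if r e = i then d e • w i else 0) = d e • (e : Fin (n+1) → ℝ) := by
      intro e _
      rw [Finset.sum_ite_eq]
      simp [hrw e]
    rw [Finset.sum_congr rfl h2]
    exact hdvec
  -- barycentric coordinates of the limit points w j w.r.t. v t
  have hMex : ∀ (j : Fin m) (t : ℕ), ∃ row : Fin m → ℝ, (V t).card = m →
      ((∀ i, 0 ≤ row i) ∧ ∑ i, row i = 1 ∧ ∑ i, row i • v t i = w j) := by
    intro j t
    by_cases ht : (V t).card = m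
    · have hwj : w j ∈ convexHull ℝ ((V t : Set (Fin (n+1) → ℝ))) := by
        rw [← hVe t]; exact hwK j t
      obtain ⟨μ, hμ0, hμ1, hμ2⟩ := Finset.mem_convexHull'.1 hwj
      refine ⟨fun i => μ (v t i), fun _ => ⟨fun i => hμ0 _ (hvmemV t ht i), ?_, ?_⟩⟩
      · rw [sum_finset_enum (V t) (v t) (hvinj t ht) (hvmemV t ht) ht μ]; exact hμ1
      · rw [sum_finset_enum (V t) (v t) (hvinj t ht) (hvmemV t ht) ht (fun q => μ q • q)]
        exact hμ2
    · exact ⟨0, fun h => absurd h ht⟩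
  choose M hM using hMex
  have hMlimex : ∀ j i, ∃ l, Tendsto (fun t => M j t i) (𝒰:Filter ℕ) (𝓝 l) := by
    intro j i
    apply ulim_exists
    filter_upwards [hAev] with t ht
    refine ⟨(hM j t ht).1 i, ?_⟩
    rw [← (hM j t ht).2.1]
    exact Finset.single_le_sum (fun k _ => (hM j t ht).1 k) (Finset.mem_univ i)
  choose Mlim hMlim using hMlimex
  have f3 : ∀ j i, 0 ≤ Mlim j i := by
    intro j i
    refine ge_of_tendsto (hMlim j i) ?_
    filter_upwards [hAev] with t ht
    exact (hM j t ht).1 i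
  have f1 : ∀ j, ∑ i, Mlim j i = 1 := by
    intro j
    refine ulim_eq (tendsto_finset_sum _ (fun i _ => hMlim j i)) ?_
    filter_upwards [hAev] with t ht
    exact (hM j t ht).2.1
  have f2 : ∀ j, ∑ i, Mlim j i • w i = w j := by
    intro j
    refine ulim_eq (tendsto_finset_sum _ (fun i _ => (hMlim j i).smul (hw i))) ?_
    filter_upwards [hAev] with t ht
    exact (hM j t ht).2.2
  have f4 : ∀ i, ∑ j, c j * Mlim j i = 0 := by
    intro i
    refine ulim_eq (tendsto_finset_sum _ (fun j _ => (hMlim j i).const_mul (c j))) ?_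
    filter_upwards [hAev] with t ht
    -- at each good time t, the transported dependence vanishes by affine independence
    refine affineIndependent_iff.1 (hvAI t ht) Finset.univ (fun i => ∑ j, c j * M j t i) ?_ ?_ i
      (Finset.mem_univ i)
    · rw [Finset.sum_comm]
      have : ∀ j ∈ Finset.univ, (∑ i : Fin m, c j * M j t i) = c j := by
        intro j _
        rw [← Finset.mul_sum, (hM j t ht).2.1, mul_one]
      rw [Finset.sum_congr rfl this, hc0]
    · have h1 : ∀ i : Fin m, (∑ j, c j * M j t i) • v t i = ∑ j, c j • (M j t i • v t i) := by
        intro i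
        rw [Finset.sum_smul]
        exact Finset.sum_congr rfl (fun j _ => by rw [mul_smul])
      simp_rw [h1]
      rw [Finset.sum_comm]
      have h2 : ∀ j ∈ Finset.univ, (∑ i : Fin m, c j • (M j t i • v t i)) = c j • w j := by
        intro j _
        rw [← Finset.smul_sum, (hM j t ht).2.2]
      rw [Finset.sum_congr rfl h2]
      exact hcvec
  have f5 : ∀ (e : {x // x ∈ V0}) (i : Fin m), Mlim (r e) i ≠ 0 → w i = (e : Fin (n+1) → ℝ) := by
    intro e
    refine repr_support_lemma V0 e.2 (hV0min _ e.2) (Mlim (r e)) (f3 _) (f1 _) w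
      (fun i => ?_) (by rw [f2 (r e), hrw e])
    rw [hV0eq]
    exact hwW0hull i
  -- final computation
  set p0 : Fin (n+1) → ℝ := (e0 : Fin (n+1) → ℝ) with hp0def
  set I0 : Finset (Fin m) := Finset.univ.filter (fun i => w i = p0) with hI0def
  have hS1 : ∑ i ∈ I0, ∑ j, c j * Mlim j i = 0 := Finset.sum_eq_zero fun i _ => f4 i
  have hS2 : ∑ i ∈ I0, ∑ j, c j * Mlim j i = ∑ j, c j * ∑ i ∈ I0, Mlim j i := by
    rw [Finset.sum_comm]
    exact Finset.sum_congr rfl (fun j _ => by rw [Finset.mul_sum])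
  have hcne : ∀ j : Fin m, c j ≠ 0 → ∃ e ∈ s, r e = j := by
    intro j hcj
    by_contra hno
    push_neg at hno
    apply hcj
    rw [hcdef]
    exact Finset.sum_eq_zero (fun e he => if_neg (hno e he))
  have hinner : ∀ j, c j * (∑ i ∈ I0, Mlim j i) = if j = r e0 then c j else 0 := by
    intro j
    by_cases hcj : c j = 0
    · simp [hcj]
    obtain ⟨e, hes, hrej⟩ := hcne j hcj
    by_cases hee : (e : Fin (n+1) → ℝ) = p0
    · have he0 : e = e0 := Subtype.ext hee
      subst he0
      rw [if_pos hrej.symm]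
      have hfull : ∑ i ∈ I0, Mlim j i = 1 := by
        have hsplit := Finset.sum_filter_add_sum_filter_not Finset.univ
          (fun i => w i = p0) (Mlim j)
        have hzero : ∑ i ∈ Finset.univ.filter (fun i => ¬ (w i = p0)), Mlim j i = 0 := by
          refine Finset.sum_eq_zero (fun i hi => ?_)
          have hwi : w i ≠ p0 := (Finset.mem_filter.1 hi).2
          by_contra hMne
          exact hwi (by rw [← hrej] at hMne; rw [(f5 e i hMne), hee])
        rw [hzero, add_zero] at hsplit
        rw [hI0def, hsplit, f1]
      rw [hfull, mul_one]
    · rw [if_neg (fun hje : j = r e0 => hee (by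
        have : e = e0 := hrinj (hrej.trans hje)
        rw [this]))]
      have hzero : ∑ i ∈ I0, Mlim j i = 0 := by
        refine Finset.sum_eq_zero (fun i hi => ?_)
        have hwi : w i = p0 := (Finset.mem_filter.1 hi).2
        by_contra hMne
        exact hee (by rw [← (f5 e i (by rwa [hrej]))]; exact hwi)
      rw [hzero, mul_zero]
  have hfinal : ∑ j, c j * ∑ i ∈ I0, Mlim j i = c (r e0) := by
    rw [Finset.sum_congr rfl (fun j _ => hinner j)]
    simp [Finset.sum_ite_eq']
  have hcre0 : c (r e0) = d e0 := by
    have hc : c (r e0) = ∑ e ∈ s, if r e = r e0 then d e else 0 := rfl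
    rw [hc, Finset.sum_eq_single_of_mem e0 he0s
      (fun e he hne => if_neg (fun h => hne (hrinj h))), if_pos rfl]
  rw [hS2, hfinal, hcre0] at hS1
  exact hde0 hS1
end

section
/- Let A_1, A_2, A_3, … be a sequence of matrices in Σ such that infinitely many A_t are not permutation matrices, and set K_t = (A_1 A_2 ⋯ A_t)[Δ] (so Δ = K_0 ⊇ K_1 ⊇ K_2 ⊇ ⋯ is a descending chain of unimodular simplexes that is strictly decreasing infinitely often). Then K = ∩_{t≥0} K_t is a simplex of affine dimension strictly less than n; in particular K has n-dimensional Lebesgue measure zero in the hyperplane Σ_i x_i = 1. -/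
open Matrix

namespace Stmt1Aux

variable {n : ℕ}

lemma inSigma_one : inSigma (1 : MatZ n) := by
  refine ⟨by simp, fun i j => ?_⟩
  by_cases h : i = j <;> simp [Matrix.one_apply, h]

lemma inSigma_mul {M N : MatZ n} (hM : inSigma M) (hN : inSigma N) : inSigma (M * N) := by
  refine ⟨by rw [Matrix.det_mul]; exact hM.1.mul hN.1, fun i j => ?_⟩
  rw [Matrix.mul_apply]
  exact Finset.sum_nonneg fun k _ => mul_nonneg (hM.2 i k) (hN.2 k j)

/-- the product matrices -/
noncomputable def Pm (A : ℕ → MatZ n) (t : ℕ) : MatZ n := ((List.range t).map A).prod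

lemma Pm_zero (A : ℕ → MatZ n) : Pm A 0 = 1 := by simp [Pm]

lemma Pm_succ (A : ℕ → MatZ n) (t : ℕ) : Pm A (t + 1) = Pm A t * A t := by
  simp [Pm, List.range_succ]

variable {A : ℕ → MatZ n}

lemma inSigma_Pm (hA : ∀ t, inSigma (A t)) (t : ℕ) : inSigma (Pm A t) := by
  induction t with
  | zero => simpa [Pm_zero] using inSigma_one
  | succ t ih => rw [Pm_succ]; exact inSigma_mul ih (hA t)

/-- column sums over ℤ are at least 1 -/
lemma colsum_pos {M : MatZ n} (hM : inSigma M) (j : Fin (n + 1)) : 1 ≤ ∑ i, M i j := by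
  by_contra h
  push_neg at h
  have h0 : ∀ i, M i j = 0 := by
    intro i
    have hnn : ∀ i, 0 ≤ M i j := fun i => hM.2 i j
    have : ∑ i, M i j = 0 := le_antisymm (by omega) (Finset.sum_nonneg fun i _ => hnn i)
    exact (Finset.sum_eq_zero_iff_of_nonneg (fun i _ => hnn i)).1 this i (Finset.mem_univ i)
  have : M.det = 0 := Matrix.det_eq_zero_of_column_eq_zero j h0
  have hu := hM.1
  rw [this] at hu
  exact (by simp : ¬ IsUnit (0 : ℤ)) hu

lemma toR_mul (M N : MatZ n) : toR (M * N) = toR M * toR N := by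
  simpa [toR] using Matrix.map_mul (L := M) (M := N) (f := Int.castRingHom ℝ)

lemma toR_one : toR (1 : MatZ n) = 1 := by
  simp [toR]

lemma toR_det (M : MatZ n) : (toR M).det = ((M.det : ℤ) : ℝ) := by
  simpa [toR] using ((Int.castRingHom ℝ).map_det M).symm

lemma toR_entry_nonneg {M : MatZ n} (hM : inSigma M) (i j) : (0:ℝ) ≤ toR M i j := by
  simp only [toR, Matrix.map_apply]
  exact_mod_cast hM.2 i j

lemma toR_det_isUnit {M : MatZ n} (hM : inSigma M) : IsUnit (toR M).det := by
  rw [toR_det]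
  rcases Int.isUnit_iff.1 hM.1 with h | h <;> simp [h, isUnit_iff_ne_zero]

lemma toR_colsum {M : MatZ n} (hM : inSigma M) (j) : (1:ℝ) ≤ ∑ i, toR M i j := by
  have := colsum_pos hM j
  have : ((1:ℤ):ℝ) ≤ ((∑ i, M i j : ℤ) : ℝ) := by exact_mod_cast this
  simpa [toR] using this



lemma sum_mulVec (M : Matrix (Fin (n+1)) (Fin (n+1)) ℝ) (x : Fin (n+1) → ℝ) :
    ∑ i, (M *ᵥ x) i = ∑ j, (∑ i, M i j) * x j := by
  simp only [Matrix.mulVec, dotProduct, Finset.sum_mul]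
  exact Finset.sum_comm

lemma sum_mulVec_ge_one {M : MatZ n} (hM : inSigma M) {x : Fin (n+1) → ℝ}
    (hx : x ∈ stdSimplex ℝ (Fin (n+1))) : 1 ≤ ∑ i, (toR M *ᵥ x) i := by
  rw [sum_mulVec]
  calc (1:ℝ) = ∑ j, x j := hx.2.symm
  _ ≤ ∑ j, (∑ i, toR M i j) * x j := by
      refine Finset.sum_le_sum fun j _ => ?_
      nth_rewrite 1 [← one_mul (x j)]
      exact mul_le_mul_of_nonneg_right (toR_colsum hM j) (hx.1 j)

lemma projAct_mem_stdSimplex {M : MatZ n} (hM : inSigma M) {x : Fin (n+1) → ℝ}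
    (hx : x ∈ stdSimplex ℝ (Fin (n+1))) :
    projAct (toR M) x ∈ stdSimplex ℝ (Fin (n+1)) := by
  have hs := sum_mulVec_ge_one hM hx
  have hs0 : (0:ℝ) < ∑ i, (toR M *ᵥ x) i := lt_of_lt_of_le one_pos hs
  constructor
  · intro i
    simp only [projAct, Pi.smul_apply, smul_eq_mul, Matrix.mulVec, dotProduct]
    refine mul_nonneg (inv_nonneg.2 hs0.le) ?_
    exact Finset.sum_nonneg fun j _ => mul_nonneg (toR_entry_nonneg hM i j) (hx.1 j)
  · simp only [projAct, Pi.smul_apply, smul_eq_mul, ← Finset.mul_sum]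
    field_simp

lemma simg_mul_subset {M B : MatZ n} (hM : inSigma M) (hB : inSigma B) :
    simg (M * B) ⊆ simg M := by
  rintro _ ⟨x, hx, rfl⟩
  refine ⟨projAct (toR B) x, projAct_mem_stdSimplex hB hx, ?_⟩
  have hsB : (0:ℝ) < ∑ i, (toR B *ᵥ x) i := lt_of_lt_of_le one_pos (sum_mulVec_ge_one hB hx)
  have hsMB : (0:ℝ) < ∑ i, (toR (M * B) *ᵥ x) i :=
    lt_of_lt_of_le one_pos (sum_mulVec_ge_one (inSigma_mul hM hB) hx)
  set sB := ∑ i, (toR B *ᵥ x) i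
  have key : toR M *ᵥ projAct (toR B) x = sB⁻¹ • (toR (M * B) *ᵥ x) := by
    rw [projAct, Matrix.mulVec_smul, Matrix.mulVec_mulVec, ← toR_mul]
  rw [projAct, key]
  have hsum : ∑ i, (sB⁻¹ • (toR (M * B) *ᵥ x)) i = sB⁻¹ * ∑ i, (toR (M * B) *ᵥ x) i := by
    simp [Finset.mul_sum]
  rw [hsum, smul_smul]
  congr 1
  rw [mul_inv]
  field_simp



/-- column-normalized matrix -/
noncomputable def Qmat (M : MatZ n) : Matrix (Fin (n+1)) (Fin (n+1)) ℝ :=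
  Matrix.of fun i j => toR M i j / (∑ k, toR M k j)

lemma colR_pos {M : MatZ n} (hM : inSigma M) (j) : (0:ℝ) < ∑ k, toR M k j :=
  lt_of_lt_of_le one_pos (toR_colsum hM j)

lemma Qmat_nonneg {M : MatZ n} (hM : inSigma M) (i j) : 0 ≤ Qmat M i j :=
  div_nonneg (toR_entry_nonneg hM i j) (colR_pos hM j).le

lemma Qmat_le_one {M : MatZ n} (hM : inSigma M) (i j) : Qmat M i j ≤ 1 := by
  rw [Qmat, Matrix.of_apply, div_le_one (colR_pos hM j)]
  exact Finset.single_le_sum (fun k _ => toR_entry_nonneg hM k j) (Finset.mem_univ i)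

lemma Qmat_colsum {M : MatZ n} (hM : inSigma M) (j) : ∑ i, Qmat M i j = 1 := by
  simp only [Qmat, Matrix.of_apply]
  rw [← Finset.sum_div]
  exact div_self (colR_pos hM j).ne'

lemma Qmat_mulVec {M : MatZ n} (hM : inSigma M) (x : Fin (n+1) → ℝ) :
    Qmat M *ᵥ (fun j => (∑ k, toR M k j) * x j) = toR M *ᵥ x := by
  funext i
  simp only [Matrix.mulVec, dotProduct, Qmat, Matrix.of_apply]
  refine Finset.sum_congr rfl fun j _ => ?_
  have hc := (colR_pos hM j).ne'
  field_simp

lemma mulVec_div {M : MatZ n} (hM : inSigma M) (μ : Fin (n+1) → ℝ) :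
    toR M *ᵥ (fun j => μ j / (∑ k, toR M k j)) = Qmat M *ᵥ μ := by
  funext i
  simp only [Matrix.mulVec, dotProduct, Qmat, Matrix.of_apply]
  refine Finset.sum_congr rfl fun j _ => ?_
  have hc := (colR_pos hM j).ne'
  field_simp

lemma sum_Qmat_mulVec {M : MatZ n} (hM : inSigma M) {μ : Fin (n+1) → ℝ}
    (hμ : μ ∈ stdSimplex ℝ (Fin (n+1))) : ∑ i, (Qmat M *ᵥ μ) i = 1 := by
  rw [sum_mulVec]
  calc ∑ j, (∑ i, Qmat M i j) * μ j = ∑ j, μ j := by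
        refine Finset.sum_congr rfl fun j _ => ?_
        rw [Qmat_colsum hM, one_mul]
  _ = 1 := hμ.2

lemma simg_eq {M : MatZ n} (hM : inSigma M) :
    simg M = (fun μ => Qmat M *ᵥ μ) '' stdSimplex ℝ (Fin (n+1)) := by
  ext v
  constructor
  · rintro ⟨x, hx, rfl⟩
    have hs : (0:ℝ) < ∑ i, (toR M *ᵥ x) i := lt_of_lt_of_le one_pos (sum_mulVec_ge_one hM hx)
    refine ⟨(∑ i, (toR M *ᵥ x) i)⁻¹ • fun j => (∑ k, toR M k j) * x j, ⟨fun j => ?_, ?_⟩, ?_⟩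
    · exact mul_nonneg (inv_nonneg.2 hs.le) (mul_nonneg (colR_pos hM j).le (hx.1 j))
    · simp only [Pi.smul_apply, smul_eq_mul, ← Finset.mul_sum]
      rw [← sum_mulVec]
      field_simp
    · show Qmat M *ᵥ ((∑ i, (toR M *ᵥ x) i)⁻¹ • fun j => (∑ k, toR M k j) * x j)
          = projAct (toR M) x
      rw [Matrix.mulVec_smul, Qmat_mulVec hM]
      rfl
  · rintro ⟨μ, hμ, rfl⟩
    have hT : (0:ℝ) < ∑ k, μ k / (∑ i, toR M i k) := by
      rcases Finset.exists_lt_of_sum_lt (f := fun _ : Fin (n+1) => (0:ℝ)) (g := μ)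
        (by rw [hμ.2]; simp) with ⟨k, _, hk⟩
      refine Finset.sum_pos' (fun k _ => div_nonneg (hμ.1 k) (colR_pos hM k).le) ?_
      exact ⟨k, Finset.mem_univ k, div_pos hk (colR_pos hM k)⟩
    set T := ∑ k, μ k / (∑ i, toR M i k) with hTdef
    refine ⟨T⁻¹ • fun j => μ j / (∑ i, toR M i j), ⟨fun j => ?_, ?_⟩, ?_⟩
    · exact mul_nonneg (inv_nonneg.2 hT.le) (div_nonneg (hμ.1 j) (colR_pos hM j).le)
    · simp only [Pi.smul_apply, smul_eq_mul, ← Finset.mul_sum, ← hTdef]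
      field_simp
    · have hmv : toR M *ᵥ (T⁻¹ • fun j => μ j / (∑ i, toR M i j)) = T⁻¹ • (Qmat M *ᵥ μ) := by
        rw [Matrix.mulVec_smul, mulVec_div hM]
      rw [projAct, hmv]
      have hsum : ∑ i, (T⁻¹ • (Qmat M *ᵥ μ)) i = T⁻¹ := by
        simp only [Pi.smul_apply, smul_eq_mul, ← Finset.mul_sum]
        rw [sum_Qmat_mulVec hM hμ, mul_one]
      rw [hsum, inv_inv, smul_smul, mul_inv_cancel₀ hT.ne', one_smul]

section Cone
variable {n : ℕ} {A : ℕ → MatZ n}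

noncomputable def pR (A : ℕ → MatZ n) (t : ℕ) : Matrix (Fin (n+1)) (Fin (n+1)) ℝ :=
  toR (Pm A t)

noncomputable def aR (A : ℕ → MatZ n) (t : ℕ) : Matrix (Fin (n+1)) (Fin (n+1)) ℝ :=
  toR (A t)

def Cset (A : ℕ → MatZ n) (t : ℕ) : Set (Fin (n+1) → ℝ) := {v | 0 ≤ (pR A t)⁻¹ *ᵥ v}

def Ccone (A : ℕ → MatZ n) : Set (Fin (n+1) → ℝ) := ⋂ t, Cset A t

lemma mulVec_nonneg {M : Matrix (Fin (n+1)) (Fin (n+1)) ℝ} (hM : ∀ i j, 0 ≤ M i j)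
    {u : Fin (n+1) → ℝ} (hu : 0 ≤ u) : 0 ≤ M *ᵥ u := by
  intro i
  simp only [Pi.zero_apply, Matrix.mulVec, dotProduct]
  exact Finset.sum_nonneg fun j _ => mul_nonneg (hM i j) (hu j)

lemma mulVec_mono {M : Matrix (Fin (n+1)) (Fin (n+1)) ℝ} (hM : ∀ i j, 0 ≤ M i j)
    {u v : Fin (n+1) → ℝ} (huv : u ≤ v) : M *ᵥ u ≤ M *ᵥ v := by
  have h := mulVec_nonneg hM (u := v - u) (fun i => by
    simpa using sub_nonneg.2 (huv i))
  intro i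
  have := h i
  rw [Matrix.mulVec_sub] at this
  simpa using sub_nonneg.1 this

variable (hA : ∀ t, inSigma (A t))
include hA

lemma pR_det (t : ℕ) : IsUnit (pR A t).det := toR_det_isUnit (inSigma_Pm hA t)

lemma pR_nonneg (t : ℕ) (i j) : (0:ℝ) ≤ pR A t i j := toR_entry_nonneg (inSigma_Pm hA t) i j

lemma aR_nonneg (t : ℕ) (i j) : (0:ℝ) ≤ aR A t i j := toR_entry_nonneg (hA t) i j

lemma pR_succ (t : ℕ) : pR A (t+1) = pR A t * aR A t := by
  rw [pR, Pm_succ, toR_mul]; rfl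

lemma pinv_cancel (t : ℕ) (u : Fin (n+1) → ℝ) :
    (pR A t)⁻¹ *ᵥ (pR A t *ᵥ u) = u := by
  rw [Matrix.mulVec_mulVec, Matrix.nonsing_inv_mul _ (pR_det hA t), Matrix.one_mulVec]

lemma memCset_iff (t : ℕ) (v : Fin (n+1) → ℝ) :
    v ∈ Cset A t ↔ ∃ u, 0 ≤ u ∧ v = pR A t *ᵥ u := by
  constructor
  · intro hv
    refine ⟨(pR A t)⁻¹ *ᵥ v, hv, ?_⟩
    rw [Matrix.mulVec_mulVec, Matrix.mul_nonsing_inv _ (pR_det hA t), Matrix.one_mulVec]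
  · rintro ⟨u, hu, rfl⟩
    show 0 ≤ (pR A t)⁻¹ *ᵥ (pR A t *ᵥ u)
    rw [pinv_cancel hA]
    exact hu

lemma aR_pinv_succ (t : ℕ) : aR A t * (pR A (t+1))⁻¹ = (pR A t)⁻¹ := by
  have h : (pR A t)⁻¹ * (pR A (t+1) * (pR A (t+1))⁻¹) = (pR A t)⁻¹ * pR A t * aR A t * (pR A (t+1))⁻¹ := by
    rw [pR_succ hA]
    noncomm_ring
  rw [Matrix.mul_nonsing_inv _ (pR_det hA (t+1)), mul_one,
    Matrix.nonsing_inv_mul _ (pR_det hA t), one_mul] at h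
  exact h.symm

lemma Cset_antitone : Antitone (Cset A) := by
  refine antitone_nat_of_succ_le fun t => ?_
  intro v hv
  rcases (memCset_iff hA (t+1) v).1 hv with ⟨u, hu, rfl⟩
  refine (memCset_iff hA t _).2 ⟨aR A t *ᵥ u, mulVec_nonneg (aR_nonneg hA t) hu, ?_⟩
  rw [Matrix.mulVec_mulVec, ← pR_succ hA]

lemma isClosed_Cset (t : ℕ) : IsClosed (Cset A t) := by
  have : Cset A t = (fun v => (pR A t)⁻¹ *ᵥ v) ⁻¹' (Set.Ici 0) := rfl
  rw [this]
  exact IsClosed.preimage (continuous_const.matrix_mulVec continuous_id) isClosed_Ici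

lemma isClosed_Ccone : IsClosed (Ccone A) :=
  isClosed_iInter fun t => isClosed_Cset hA t

lemma simg_subset_Cset (t : ℕ) : simg (Pm A t) ⊆ Cset A t := by
  rintro _ ⟨x, hx, rfl⟩
  show 0 ≤ (pR A t)⁻¹ *ᵥ projAct (toR (Pm A t)) x
  have : projAct (toR (Pm A t)) x
      = pR A t *ᵥ ((∑ i, (toR (Pm A t) *ᵥ x) i)⁻¹ • x) := by
    rw [Matrix.mulVec_smul]; rfl
  rw [this, pinv_cancel hA]
  have hs : (0:ℝ) < ∑ i, (toR (Pm A t) *ᵥ x) i :=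
    lt_of_lt_of_le one_pos (sum_mulVec_ge_one (inSigma_Pm hA t) hx)
  intro i
  exact mul_nonneg (inv_nonneg.2 hs.le) (hx.1 i)

lemma Cset_zero : Cset A 0 = {v | 0 ≤ v} := by
  have h1 : pR A 0 = 1 := by rw [pR, Pm_zero, toR_one]
  ext v
  show 0 ≤ (pR A 0)⁻¹ *ᵥ v ↔ _
  rw [h1, inv_one, Matrix.one_mulVec]
  rfl

lemma Ccone_subset_nonneg : Ccone A ⊆ {v | 0 ≤ v} := by
  intro v hv
  rw [← Cset_zero hA]
  exact Set.mem_iInter.1 hv 0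

lemma Ccone_add {x y} (hx : x ∈ Ccone A) (hy : y ∈ Ccone A) : x + y ∈ Ccone A := by
  refine Set.mem_iInter.2 fun t => ?_
  have hx' := Set.mem_iInter.1 hx t
  have hy' := Set.mem_iInter.1 hy t
  show 0 ≤ (pR A t)⁻¹ *ᵥ (x + y)
  rw [Matrix.mulVec_add]
  exact add_nonneg hx' hy'

lemma Ccone_smul {c : ℝ} (hc : 0 ≤ c) {x} (hx : x ∈ Ccone A) : c • x ∈ Ccone A := by
  refine Set.mem_iInter.2 fun t => ?_
  have hx' := Set.mem_iInter.1 hx t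
  show 0 ≤ (pR A t)⁻¹ *ᵥ (c • x)
  rw [Matrix.mulVec_smul]
  intro i
  exact mul_nonneg hc (hx' i)

lemma Ccone_zero : (0 : Fin (n+1) → ℝ) ∈ Ccone A := by
  refine Set.mem_iInter.2 fun t => ?_
  show 0 ≤ (pR A t)⁻¹ *ᵥ (0 : Fin (n+1) → ℝ)
  rw [Matrix.mulVec_zero]

/-- the infimum construction: the heart of the lattice-cone argument -/
lemma exists_inf {x y} (hx : x ∈ Ccone A) (hy : y ∈ Ccone A) :
    ∃ z, z ∈ Ccone A ∧ x - z ∈ Ccone A ∧ y - z ∈ Ccone A ∧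
      ∀ w, x - w ∈ Ccone A → y - w ∈ Ccone A → z - w ∈ Ccone A := by
  classical
  set u : ℕ → Fin (n+1) → ℝ :=
    fun t i => min (((pR A t)⁻¹ *ᵥ x) i) (((pR A t)⁻¹ *ᵥ y) i) with hu
  set z : ℕ → Fin (n+1) → ℝ := fun t => pR A t *ᵥ u t with hz
  have hxt : ∀ t, 0 ≤ (pR A t)⁻¹ *ᵥ x := fun t => Set.mem_iInter.1 hx t
  have hyt : ∀ t, 0 ≤ (pR A t)⁻¹ *ᵥ y := fun t => Set.mem_iInter.1 hy t
  have hu_nonneg : ∀ t, 0 ≤ u t := fun t i => le_min (hxt t i) (hyt t i)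
  have hu_le_x : ∀ t, u t ≤ (pR A t)⁻¹ *ᵥ x := fun t i => min_le_left _ _
  have hu_le_y : ∀ t, u t ≤ (pR A t)⁻¹ *ᵥ y := fun t i => min_le_right _ _
  -- key inequality
  have hkey : ∀ t, aR A t *ᵥ u (t+1) ≤ u t := by
    intro t i
    have hxx : aR A t *ᵥ u (t+1) ≤ aR A t *ᵥ ((pR A (t+1))⁻¹ *ᵥ x) :=
      mulVec_mono (aR_nonneg hA t) (hu_le_x (t+1))
    have hyy : aR A t *ᵥ u (t+1) ≤ aR A t *ᵥ ((pR A (t+1))⁻¹ *ᵥ y) :=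
      mulVec_mono (aR_nonneg hA t) (hu_le_y (t+1))
    have hid : ∀ v, aR A t *ᵥ ((pR A (t+1))⁻¹ *ᵥ v) = (pR A t)⁻¹ *ᵥ v := by
      intro v
      rw [Matrix.mulVec_mulVec, aR_pinv_succ hA]
    rw [hid] at hxx hyy
    exact le_min (hxx i) (hyy i)
  have hz_succ : ∀ t, z (t+1) = pR A t *ᵥ (aR A t *ᵥ u (t+1)) := by
    intro t
    show pR A (t+1) *ᵥ u (t+1) = _
    rw [pR_succ hA, ← Matrix.mulVec_mulVec]
  have hz_anti : ∀ i, Antitone fun t => z t i := by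
    intro i
    refine antitone_nat_of_succ_le fun t => ?_
    have : z (t+1) ≤ z t := by
      rw [hz_succ]
      exact mulVec_mono (pR_nonneg hA t) (hkey t)
    exact this i
  have hz_nonneg : ∀ t, 0 ≤ z t := fun t => mulVec_nonneg (pR_nonneg hA t) (hu_nonneg t)
  -- limit
  have hlim : ∀ i, ∃ l, Filter.Tendsto (fun t => z t i) Filter.atTop (nhds l) := by
    intro i
    refine ⟨⨅ t, z t i, tendsto_atTop_ciInf (hz_anti i) ⟨0, ?_⟩⟩
    rintro _ ⟨t, rfl⟩
    exact hz_nonneg t i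
  choose ζ hζ using hlim
  have hζlim : Filter.Tendsto z Filter.atTop (nhds ζ) := tendsto_pi_nhds.2 hζ
  -- membership helper
  have hmem : ∀ (v : ℕ → Fin (n+1) → ℝ) (l : Fin (n+1) → ℝ),
      Filter.Tendsto v Filter.atTop (nhds l) → (∀ t, v t ∈ Cset A t) → l ∈ Ccone A := by
    intro v l hvl hvt
    refine Set.mem_iInter.2 fun s => ?_
    refine (isClosed_Cset hA s).mem_of_tendsto hvl ?_
    refine Filter.eventually_atTop.2 ⟨s, fun t ht => ?_⟩
    exact Cset_antitone hA ht (hvt t)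
  have hzC : ∀ t, z t ∈ Cset A t := by
    intro t
    exact (memCset_iff hA t _).2 ⟨u t, hu_nonneg t, rfl⟩
  refine ⟨ζ, hmem z ζ hζlim hzC, ?_, ?_, ?_⟩
  · refine hmem (fun t => x - z t) (x - ζ) (Filter.Tendsto.const_sub x hζlim) fun t => ?_
    show 0 ≤ (pR A t)⁻¹ *ᵥ (x - z t)
    rw [Matrix.mulVec_sub, hz]
    intro i
    rw [pinv_cancel hA]
    simpa using sub_nonneg.2 (hu_le_x t i)
  · refine hmem (fun t => y - z t) (y - ζ) (Filter.Tendsto.const_sub y hζlim) fun t => ?_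
    show 0 ≤ (pR A t)⁻¹ *ᵥ (y - z t)
    rw [Matrix.mulVec_sub, hz]
    intro i
    rw [pinv_cancel hA]
    simpa using sub_nonneg.2 (hu_le_y t i)
  · intro w hxw hyw
    refine hmem (fun t => z t - w) (ζ - w) (Filter.Tendsto.sub_const hζlim w) fun t => ?_
    have hxw' := Set.mem_iInter.1 hxw t
    have hyw' := Set.mem_iInter.1 hyw t
    have hwx : (pR A t)⁻¹ *ᵥ w ≤ (pR A t)⁻¹ *ᵥ x := by
      intro i
      have : (0:ℝ) ≤ ((pR A t)⁻¹ *ᵥ (x - w)) i := hxw' i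
      rw [Matrix.mulVec_sub] at this
      simpa using sub_nonneg.1 this
    have hwy : (pR A t)⁻¹ *ᵥ w ≤ (pR A t)⁻¹ *ᵥ y := by
      intro i
      have : (0:ℝ) ≤ ((pR A t)⁻¹ *ᵥ (y - w)) i := hyw' i
      rw [Matrix.mulVec_sub] at this
      simpa using sub_nonneg.1 this
    show 0 ≤ (pR A t)⁻¹ *ᵥ (z t - w)
    rw [Matrix.mulVec_sub, hz]
    intro i
    rw [pinv_cancel hA]
    simp only [Pi.sub_apply]
    exact sub_nonneg.2 (le_min (hwx i) (hwy i))

end Cone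

section Growth
variable {n : ℕ}

lemma exists_perm_pos {M : MatZ n} (hM : inSigma M) :
    ∃ σ : Equiv.Perm (Fin (n+1)), ∀ j, 1 ≤ M (σ j) j := by
  by_contra h
  push_neg at h
  have hdet : M.det = 0 := by
    rw [Matrix.det_apply]
    refine Finset.sum_eq_zero fun σ _ => ?_
    rcases h σ with ⟨j, hj⟩
    have hj0 : M (σ j) j = 0 := le_antisymm (by omega) (hM.2 _ _)
    have hp : ∏ i, M (σ i) i = 0 := Finset.prod_eq_zero (Finset.mem_univ j) hj0
    rw [hp, smul_zero]
  have := hM.1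
  rw [hdet] at this
  exact (by simp : ¬ IsUnit (0 : ℤ)) this

/-- integer column-sum product -/
def rho {n : ℕ} (M : MatZ n) : ℤ := ∏ j, ∑ i, M i j

lemma colsum_mul (M N : MatZ n) (j) :
    ∑ i, (M * N) i j = ∑ k, (∑ i, M i k) * N k j := by
  simp only [Matrix.mul_apply, Finset.sum_mul]
  exact Finset.sum_comm

lemma one_le_prod_int {α : Type*} {s : Finset α} {f : α → ℤ} (h : ∀ j ∈ s, 1 ≤ f j) :
    1 ≤ ∏ j ∈ s, f j := by
  calc (1:ℤ) = ∏ _j ∈ s, 1 := by simp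
  _ ≤ ∏ j ∈ s, f j := Finset.prod_le_prod (fun _ _ => zero_le_one) h

lemma rho_pos {M : MatZ n} (hM : inSigma M) : 1 ≤ rho M :=
  one_le_prod_int fun j _ => colsum_pos hM j

lemma rho_mul_ge {M B : MatZ n} (hM : inSigma M) (hB : inSigma B) :
    rho M ≤ rho (M * B) := by
  rcases exists_perm_pos hB with ⟨σ, hσ⟩
  have h1 : ∀ j, (∑ i, M i (σ j)) ≤ ∑ i, (M * B) i j := by
    intro j
    rw [colsum_mul]
    calc (∑ i, M i (σ j)) = (∑ i, M i (σ j)) * 1 := (mul_one _).symm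
    _ ≤ (∑ i, M i (σ j)) * B (σ j) j :=
        mul_le_mul_of_nonneg_left (hσ j) (le_trans zero_le_one (colsum_pos hM (σ j)))
    _ ≤ ∑ k, (∑ i, M i k) * B k j := by
        refine Finset.single_le_sum (f := fun k => (∑ i, M i k) * B k j) ?_ (Finset.mem_univ (σ j))
        intro k _
        exact mul_nonneg (le_trans zero_le_one (colsum_pos hM k)) (hB.2 k j)
  calc rho M = ∏ j, ∑ i, M i (σ j) := (Equiv.prod_comp σ _).symm
  _ ≤ ∏ j, ∑ i, (M * B) i j := by
      refine Finset.prod_le_prod (fun j _ => ?_) (fun j _ => h1 j)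
      exact le_trans zero_le_one (colsum_pos hM (σ j))
  _ = rho (M * B) := rfl

lemma rho_mul_gt {M B : MatZ n} (hM : inSigma M) (hB : inSigma B) (hBp : ¬ IsPermMat B) :
    rho M + 1 ≤ rho (M * B) := by
  rcases exists_perm_pos hB with ⟨σ, hσ⟩
  -- find an extra entry
  have hex : ∃ j0, 2 ≤ ∑ k, (B k j0) := by
    by_contra h
    push_neg at h
    apply hBp
    refine ⟨σ, fun i j => ?_⟩
    have hcol : ∑ k, B k j ≤ 1 := by have := h j; omega
    have h1 : B (σ j) j = 1 := by
      have : (1:ℤ) ≤ B (σ j) j := hσ j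
      have hle : B (σ j) j ≤ ∑ k, B k j :=
        Finset.single_le_sum (fun k _ => hB.2 k j) (Finset.mem_univ (σ j))
      omega
    by_cases hij : i = σ j
    · rw [if_pos hij, hij, h1]
    · rw [if_neg hij]
      have hsplit : B (σ j) j + ∑ k ∈ Finset.univ.erase (σ j), B k j = ∑ k, B k j :=
        Finset.add_sum_erase Finset.univ (fun k => B k j) (Finset.mem_univ (σ j))
      have hrest : ∑ k ∈ Finset.univ.erase (σ j), B k j ≤ 0 := by omega
      have hnn : ∀ k ∈ Finset.univ.erase (σ j), 0 ≤ B k j := fun k _ => hB.2 k j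
      have := (Finset.sum_eq_zero_iff_of_nonneg hnn).1 (le_antisymm hrest (Finset.sum_nonneg hnn))
      exact this i (Finset.mem_erase.2 ⟨hij, Finset.mem_univ i⟩)
  rcases hex with ⟨j0, hj0⟩
  -- key: column j0 of M*B gains at least 1
  have hkey : ∀ j, (∑ i, M i (σ j)) + (if j = j0 then 1 else 0) ≤ ∑ i, (M * B) i j := by
    intro j
    rw [colsum_mul]
    by_cases hj : j = j0
    · subst hj
      have hterm : ∀ k, (∑ i, M i k) * B k j ≥ B k j := by
        intro k
        nth_rewrite 2 [← one_mul (B k j)]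
        exact mul_le_mul_of_nonneg_right (colsum_pos hM k) (hB.2 k j)
      have hbig : (∑ i, M i (σ j)) * B (σ j) j + ∑ k ∈ Finset.univ.erase (σ j), B k j
          ≤ ∑ k, (∑ i, M i k) * B k j := by
        rw [← Finset.add_sum_erase Finset.univ (fun k => (∑ i, M i k) * B k j)
          (Finset.mem_univ (σ j))]
        refine add_le_add le_rfl (Finset.sum_le_sum fun k _ => hterm k)
      have hsB : B (σ j) j + ∑ k ∈ Finset.univ.erase (σ j), B k j = ∑ k, B k j :=
        Finset.add_sum_erase Finset.univ (fun k => B k j) (Finset.mem_univ (σ j))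
      have hMs : 1 ≤ ∑ i, M i (σ j) := colsum_pos hM (σ j)
      have h1B : 1 ≤ B (σ j) j := hσ j
      by_cases h2 : 2 ≤ B (σ j) j
      · have : (∑ i, M i (σ j)) * 2 ≤ (∑ i, M i (σ j)) * B (σ j) j :=
          mul_le_mul_of_nonneg_left h2 (by omega)
        have hrest : (0:ℤ) ≤ ∑ k ∈ Finset.univ.erase (σ j), B k j :=
          Finset.sum_nonneg fun k _ => hB.2 k j
        rw [if_pos rfl]
        nlinarith
      · have hB1 : B (σ j) j = 1 := by omega
        have hrest : 1 ≤ ∑ k ∈ Finset.univ.erase (σ j), B k j := by omega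
        rw [if_pos rfl]
        nlinarith
    · simp only [if_neg hj, add_zero]
      calc (∑ i, M i (σ j)) = (∑ i, M i (σ j)) * 1 := (mul_one _).symm
      _ ≤ (∑ i, M i (σ j)) * B (σ j) j :=
          mul_le_mul_of_nonneg_left (hσ j) (le_trans zero_le_one (colsum_pos hM (σ j)))
      _ ≤ ∑ k, (∑ i, M i k) * B k j := by
          refine Finset.single_le_sum (f := fun k => (∑ i, M i k) * B k j) ?_ (Finset.mem_univ (σ j))
          intro k _
          exact mul_nonneg (le_trans zero_le_one (colsum_pos hM k)) (hB.2 k j)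
  -- multiply up
  have hprod : ∏ j, ((∑ i, M i (σ j)) + (if j = j0 then 1 else 0)) ≤ rho (M * B) := by
    refine Finset.prod_le_prod (fun j _ => ?_) (fun j _ => hkey j)
    have := colsum_pos hM (σ j)
    split <;> omega
  have hsplit : ∏ j, ((∑ i, M i (σ j)) + (if j = j0 then 1 else 0))
      = ((∑ i, M i (σ j0)) + 1) * ∏ j ∈ Finset.univ.erase j0, (∑ i, M i (σ j)) := by
    rw [← Finset.mul_prod_erase Finset.univ
      (fun j => (∑ i, M i (σ j)) + (if j = j0 then 1 else 0)) (Finset.mem_univ j0), if_pos rfl]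
    congr 1
    refine Finset.prod_congr rfl fun j hj => ?_
    rw [if_neg (Finset.mem_erase.1 hj).1, add_zero]
  have hrho : rho M = (∑ i, M i (σ j0)) * ∏ j ∈ Finset.univ.erase j0, (∑ i, M i (σ j)) := by
    calc rho M = ∏ j, ∑ i, M i (σ j) := (Equiv.prod_comp σ (fun k => ∑ i, M i k)).symm
    _ = _ := (Finset.mul_prod_erase Finset.univ (fun j => ∑ i, M i (σ j))
        (Finset.mem_univ j0)).symm
  have hrest1 : 1 ≤ ∏ j ∈ Finset.univ.erase j0, (∑ i, M i (σ j)) :=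
    one_le_prod_int fun j _ => colsum_pos hM (σ j)
  calc rho M + 1 ≤ ((∑ i, M i (σ j0)) + 1) * ∏ j ∈ Finset.univ.erase j0, (∑ i, M i (σ j)) := by
        rw [hrho]; nlinarith [colsum_pos hM (σ j0)]
  _ = _ := hsplit.symm
  _ ≤ rho (M * B) := hprod
end Growth

section Limit
variable {n : ℕ} {A : ℕ → MatZ n}

lemma simg_one : simg (1 : MatZ n) = stdSimplex ℝ (Fin (n+1)) := by
  have hproj : ∀ x ∈ stdSimplex ℝ (Fin (n+1)), projAct (toR (1 : MatZ n)) x = x := by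
    intro x hx
    rw [projAct, toR_one, Matrix.one_mulVec, hx.2, inv_one, one_smul]
  ext v
  constructor
  · rintro ⟨x, hx, rfl⟩
    rw [hproj x hx]
    exact hx
  · intro hv
    exact ⟨v, hv, hproj v hv⟩

variable (hA : ∀ t, inSigma (A t))
include hA

lemma rho_Pm_mono : Monotone (fun t => rho (Pm A t)) := by
  apply monotone_nat_of_le_succ
  intro t
  rw [Pm_succ]
  exact rho_mul_ge (inSigma_Pm hA t) (hA t)

lemma rho_Pm_unbounded (hinf : {t : ℕ | ¬ IsPermMat (A t)}.Infinite) :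
    ∀ m : ℕ, ∃ t, (m : ℤ) ≤ rho (Pm A t) := by
  intro m
  induction m with
  | zero =>
    refine ⟨0, le_trans (by norm_num) (rho_pos (inSigma_Pm hA 0))⟩
  | succ m ih =>
    rcases ih with ⟨t, ht⟩
    rcases hinf.exists_gt t with ⟨t', ht', htt'⟩
    refine ⟨t' + 1, ?_⟩
    have h1 : rho (Pm A t') + 1 ≤ rho (Pm A (t' + 1)) := by
      rw [Pm_succ]
      exact rho_mul_gt (inSigma_Pm hA t') (hA t') ht'
    have h2 : rho (Pm A t) ≤ rho (Pm A t') := rho_Pm_mono hA (le_of_lt htt')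
    push_cast
    push_cast at ht
    linarith

omit hA in
lemma abs_det_toR {M : MatZ n} (hM : inSigma M) : |(toR M).det| = 1 := by
  rw [toR_det]
  rcases Int.isUnit_iff.1 hM.1 with h | h <;> rw [h] <;> norm_num

omit hA in
lemma Qmat_eq_mul_diagonal (M : MatZ n) :
    Qmat M = toR M * Matrix.diagonal (fun j => (∑ k, toR M k j)⁻¹) := by
  ext i j
  rw [Matrix.mul_diagonal]
  simp only [Qmat, Matrix.of_apply, div_eq_mul_inv]

omit hA in
lemma abs_det_Qmat {M : MatZ n} (hM : inSigma M) :
    |(Qmat M).det| = ((rho M : ℤ) : ℝ)⁻¹ := by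
  rw [Qmat_eq_mul_diagonal, Matrix.det_mul, Matrix.det_diagonal, abs_mul, abs_det_toR hM,
    one_mul, Finset.abs_prod]
  have h1 : ∀ j, |(∑ k, toR M k j)⁻¹| = (∑ k, toR M k j)⁻¹ := by
    intro j
    rw [abs_of_nonneg (inv_nonneg.2 (colR_pos hM j).le)]
  rw [Finset.prod_congr rfl fun j _ => h1 j, Finset.prod_inv_distrib]
  congr 1
  rw [rho]
  push_cast
  refine Finset.prod_congr rfl fun j _ => ?_
  simp [toR]

omit hA in
lemma tendsto_of_mulVec {u : ℕ → (Fin (n+1) → Fin (n+1) → ℝ)} {L : Fin (n+1) → Fin (n+1) → ℝ}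
    {μs : ℕ → (Fin (n+1) → ℝ)} {μL : Fin (n+1) → ℝ}
    (hu : Filter.Tendsto u Filter.atTop (nhds L))
    (hμ : Filter.Tendsto μs Filter.atTop (nhds μL)) :
    Filter.Tendsto (fun k => Matrix.of (u k) *ᵥ μs k) Filter.atTop
      (nhds (Matrix.of L *ᵥ μL)) := by
  rw [tendsto_pi_nhds]
  intro i
  have h1 : ∀ j, Filter.Tendsto (fun k => u k i j) Filter.atTop (nhds (L i j)) := by
    intro j
    exact (tendsto_pi_nhds.1 (tendsto_pi_nhds.1 hu i)) j
  have h2 : ∀ j, Filter.Tendsto (fun k => μs k j) Filter.atTop (nhds (μL j)) := by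
    intro j
    exact tendsto_pi_nhds.1 hμ j
  show Filter.Tendsto (fun k => (Matrix.of (u k) *ᵥ μs k) i) _ _
  simp only [Matrix.mulVec, dotProduct, Matrix.of_apply]
  exact tendsto_finset_sum _ fun j _ => (h1 j).mul (h2 j)

lemma simg_Pm_antitone : Antitone fun t => simg (Pm A t) := by
  refine antitone_nat_of_succ_le fun t => ?_
  rw [Pm_succ]
  exact simg_mul_subset (inSigma_Pm hA t) (hA t)

lemma isClosed_simg_Pm (t : ℕ) : IsClosed (simg (Pm A t)) := by
  rw [simg_eq (inSigma_Pm hA t)]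
  exact ((isCompact_stdSimplex ℝ (Fin (n+1))).image
    (continuous_const.matrix_mulVec continuous_id)).isClosed

lemma exists_limitQ (hinf : {t : ℕ | ¬ IsPermMat (A t)}.Infinite) :
    ∃ Q : Matrix (Fin (n+1)) (Fin (n+1)) ℝ,
      (∀ i j, 0 ≤ Q i j) ∧ (∀ j, ∑ i, Q i j = 1) ∧ Q.det = 0 ∧
      (⋂ t, simg (Pm A t)) = (fun μ => Q *ᵥ μ) '' stdSimplex ℝ (Fin (n+1)) := by
  classical
  set Qs : ℕ → (Fin (n+1) → Fin (n+1) → ℝ) := fun t i j => Qmat (Pm A t) i j with hQs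
  have hQof : ∀ t, Matrix.of (Qs t) = Qmat (Pm A t) := fun t => rfl
  have hScomp : IsCompact (Set.pi Set.univ fun _ : Fin (n+1) =>
      Set.pi Set.univ fun _ : Fin (n+1) => Set.Icc (0:ℝ) 1) :=
    isCompact_univ_pi fun _ => isCompact_univ_pi fun _ => isCompact_Icc
  have hmemS : ∀ t, Qs t ∈ (Set.pi Set.univ fun _ : Fin (n+1) =>
      Set.pi Set.univ fun _ : Fin (n+1) => Set.Icc (0:ℝ) 1) := by
    intro t
    refine Set.mem_univ_pi.2 fun i => Set.mem_univ_pi.2 fun j => ?_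
    exact ⟨Qmat_nonneg (inSigma_Pm hA t) i j, Qmat_le_one (inSigma_Pm hA t) i j⟩
  obtain ⟨QX, hQXS, φ, hφ, hconv⟩ := hScomp.tendsto_subseq hmemS
  have hentry : ∀ i j, Filter.Tendsto (fun k => Qs (φ k) i j) Filter.atTop (nhds (QX i j)) := by
    intro i j
    exact tendsto_pi_nhds.1 (tendsto_pi_nhds.1 hconv i) j
  refine ⟨Matrix.of QX, ?_, ?_, ?_, ?_⟩
  · intro i j
    exact ((Set.mem_univ_pi.1 (Set.mem_univ_pi.1 hQXS i)) j).1
  · intro j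
    have h1 : Filter.Tendsto (fun k => ∑ i, Qs (φ k) i j) Filter.atTop
        (nhds (∑ i, QX i j)) := tendsto_finset_sum _ fun i _ => hentry i j
    have h2 : ∀ k, ∑ i, Qs (φ k) i j = 1 := fun k => Qmat_colsum (inSigma_Pm hA (φ k)) j
    have h3 : Filter.Tendsto (fun _ : ℕ => (1:ℝ)) Filter.atTop (nhds 1) := tendsto_const_nhds
    have := tendsto_nhds_unique (by simpa [h2] using h1) h3
    exact this
  · -- determinant zero
    have hdc : Continuous fun M : Fin (n+1) → Fin (n+1) → ℝ => (Matrix.of M).det := by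
      apply Continuous.matrix_det
      exact continuous_id
    have h1 : Filter.Tendsto (fun k => |(Matrix.of (Qs (φ k))).det|) Filter.atTop
        (nhds (|(Matrix.of QX).det|)) := ((hdc.tendsto QX).comp hconv).abs
    have h2 : ∀ k, |(Matrix.of (Qs (φ k))).det| = ((rho (Pm A (φ k)) : ℤ) : ℝ)⁻¹ := by
      intro k
      rw [hQof, abs_det_Qmat (inSigma_Pm hA (φ k))]
    have h3 : Filter.Tendsto (fun k => ((rho (Pm A (φ k)) : ℤ) : ℝ)) Filter.atTop
        Filter.atTop := by
      rw [Filter.tendsto_atTop]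
      intro b
      rcases exists_nat_ge b with ⟨m, hm⟩
      rcases rho_Pm_unbounded hA hinf m with ⟨t, ht⟩
      rw [Filter.eventually_atTop]
      refine ⟨t, fun k hk => ?_⟩
      have h4 : rho (Pm A t) ≤ rho (Pm A (φ k)) :=
        rho_Pm_mono hA (le_trans hk (hφ.le_apply))
      calc b ≤ (m : ℝ) := hm
      _ ≤ ((rho (Pm A (φ k)) : ℤ) : ℝ) := by exact_mod_cast le_trans ht h4
    have h5 : Filter.Tendsto (fun k => ((rho (Pm A (φ k)) : ℤ) : ℝ)⁻¹) Filter.atTop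
        (nhds 0) := h3.inv_tendsto_atTop
    have h6 := tendsto_nhds_unique (by simpa [h2] using h1) h5
    exact abs_eq_zero.1 h6
  · -- the intersection is the image
    apply Set.eq_of_subset_of_subset
    · intro x hx
      have hx' : ∀ k, x ∈ simg (Pm A (φ k)) := fun k => Set.mem_iInter.1 hx (φ k)
      have hex : ∀ k, ∃ μ ∈ stdSimplex ℝ (Fin (n+1)), Qmat (Pm A (φ k)) *ᵥ μ = x := by
        intro k
        have := hx' k
        rw [simg_eq (inSigma_Pm hA (φ k))] at this
        rcases this with ⟨μ, hμ, he⟩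
        exact ⟨μ, hμ, he⟩
      choose μs hμ1 hμ2 using hex
      obtain ⟨μL, hμLΔ, ψ, hψ, hμconv⟩ := (isCompact_stdSimplex ℝ (Fin (n+1))).tendsto_subseq hμ1
      have hQψ : Filter.Tendsto (fun m => Qs (φ (ψ m))) Filter.atTop (nhds QX) :=
        hconv.comp hψ.tendsto_atTop
      have hlim := tendsto_of_mulVec hQψ hμconv
      have heq : (fun m => Matrix.of (Qs (φ (ψ m))) *ᵥ (μs ∘ ψ) m) = fun _ => x := by
        funext m
        rw [hQof]
        exact hμ2 (ψ m)
      rw [heq] at hlim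
      have := tendsto_nhds_unique hlim tendsto_const_nhds
      exact ⟨μL, hμLΔ, by simpa using this⟩
    · rintro _ ⟨μ, hμ, rfl⟩
      refine Set.mem_iInter.2 fun s => ?_
      have hvmem : ∀ k, Matrix.of (Qs (φ k)) *ᵥ μ ∈ simg (Pm A (φ k)) := by
        intro k
        rw [simg_eq (inSigma_Pm hA (φ k)), hQof]
        exact ⟨μ, hμ, rfl⟩
      have hlim : Filter.Tendsto (fun k => Matrix.of (Qs (φ k)) *ᵥ μ) Filter.atTop
          (nhds (Matrix.of QX *ᵥ μ)) := tendsto_of_mulVec hconv tendsto_const_nhds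
      refine (isClosed_simg_Pm hA s).mem_of_tendsto hlim ?_
      rw [Filter.eventually_atTop]
      refine ⟨s, fun k hk => ?_⟩
      exact simg_Pm_antitone hA (le_trans hk hφ.le_apply) (hvmem k)
end Limit

section Riesz
variable {n : ℕ} {A : ℕ → MatZ n} (hA : ∀ t, inSigma (A t))
include hA

lemma Ccone_sum {ι : Type*} (s : Finset ι) (y : ι → (Fin (n+1) → ℝ))
    (hy : ∀ i ∈ s, y i ∈ Ccone A) : ∑ i ∈ s, y i ∈ Ccone A :=
  Finset.sum_induction y (· ∈ Ccone A) (fun _ _ ha hb => Ccone_add hA ha hb)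
    (Ccone_zero hA) hy

lemma riesz_decomp {ι : Type*} [DecidableEq ι] (s : Finset ι) (y : ι → (Fin (n+1) → ℝ))
    (hy : ∀ i ∈ s, y i ∈ Ccone A) :
    ∀ z, z ∈ Ccone A → (∑ i ∈ s, y i) - z ∈ Ccone A →
    ∃ c : ι → (Fin (n+1) → ℝ), (∀ i ∈ s, c i ∈ Ccone A ∧ y i - c i ∈ Ccone A)
      ∧ z = ∑ i ∈ s, c i := by
  classical
  induction s using Finset.induction_on with
  | empty =>
    intro z hz hz2
    refine ⟨fun _ => 0, by simp, ?_⟩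
    rw [Finset.sum_empty] at hz2 ⊢
    rw [zero_sub] at hz2
    have h1 : 0 ≤ z := Ccone_subset_nonneg hA hz
    have h2 : 0 ≤ -z := Ccone_subset_nonneg hA hz2
    funext i
    have := h2 i
    simp only [Pi.neg_apply, Pi.zero_apply] at this ⊢
    have := h1 i
    simp only [Pi.zero_apply] at this
    linarith [h2 i, (by simp : (-z) i = -(z i))]
  | @insert a s' ha ih =>
    intro z hz hz2
    have hya : y a ∈ Ccone A := hy a (Finset.mem_insert_self a s')
    have hys' : ∀ i ∈ s', y i ∈ Ccone A := fun i hi => hy i (Finset.mem_insert_of_mem hi)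
    rw [Finset.sum_insert ha] at hz2
    obtain ⟨z1, hz1C, hzz1, hyz1, hinf⟩ := exists_inf hA hz hya
    have hz2C : z - z1 ∈ Ccone A := hzz1
    have hS : (∑ i ∈ s', y i) - (z - z1) ∈ Ccone A := by
      have hw := hinf (z - ∑ i ∈ s', y i) ?_ ?_
      · have heq : (∑ i ∈ s', y i) - (z - z1) = z1 - (z - ∑ i ∈ s', y i) := by abel
        rw [heq]
        exact hw
      · have heq : z - (z - ∑ i ∈ s', y i) = ∑ i ∈ s', y i := by abel
        rw [heq]
        exact Ccone_sum hA s' y hys'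
      · have heq : y a - (z - ∑ i ∈ s', y i) = (y a + ∑ i ∈ s', y i) - z := by abel
        rw [heq]
        exact hz2
    obtain ⟨c', hc', hsum⟩ := ih hys' (z - z1) hz2C hS
    refine ⟨fun i => if i = a then z1 else c' i, ?_, ?_⟩
    · intro i hi
      rcases Finset.mem_insert.1 hi with rfl | hi'
      · simp only [if_pos rfl]
        exact ⟨hz1C, hyz1⟩
      · have hne : i ≠ a := fun he => ha (he ▸ hi')
        simp only [if_neg hne]
        exact hc' i hi'
    · rw [Finset.sum_insert ha, if_pos rfl]
      have hcong : ∑ i ∈ s', (if i = a then z1 else c' i) = ∑ i ∈ s', c' i :=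
        Finset.sum_congr rfl fun i hi => by
          have hne : i ≠ a := fun he => ha (he ▸ hi)
          rw [if_neg hne]
      rw [hcong, ← hsum]
      abel

end Riesz

section Kcone
variable {n : ℕ} {A : ℕ → MatZ n} (hA : ∀ t, inSigma (A t))

noncomputable def Kset (A : ℕ → MatZ n) : Set (Fin (n+1) → ℝ) := ⋂ t, simg (Pm A t)

lemma Kset_subset_std : Kset A ⊆ stdSimplex ℝ (Fin (n+1)) := by
  intro v hv
  have := Set.mem_iInter.1 hv 0
  rwa [Pm_zero, simg_one] at this

include hA

lemma Kset_subset_Ccone : Kset A ⊆ Ccone A :=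
  fun v hv => Set.mem_iInter.2 fun t => simg_subset_Cset hA t (Set.mem_iInter.1 hv t)

lemma sum_smul_pi (c : ℝ) (v : Fin (n+1) → ℝ) : ∑ i, (c • v) i = c * ∑ i, v i := by
  simp [Finset.mul_sum]

omit hA in
lemma sum_smul_pi' (c : ℝ) (v : Fin (n+1) → ℝ) : ∑ i, (c • v) i = c * ∑ i, v i := by
  simp [Finset.mul_sum]

lemma Ccone_sub_char {v : Fin (n+1) → ℝ} (hv : v ∈ Ccone A) (hvne : v ≠ 0) :
    0 < ∑ i, v i ∧ (∑ i, v i)⁻¹ • v ∈ Kset A := by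
  have hv0 : 0 ≤ v := Ccone_subset_nonneg hA hv
  have hvi : ∃ i, v i ≠ 0 := Function.ne_iff.1 hvne
  rcases hvi with ⟨i0, hi0⟩
  have hsum_pos : 0 < ∑ i, v i :=
    Finset.sum_pos' (fun i _ => hv0 i)
      ⟨i0, Finset.mem_univ i0, lt_of_le_of_ne (hv0 i0) (Ne.symm hi0)⟩
  refine ⟨hsum_pos, Set.mem_iInter.2 fun t => ?_⟩
  rcases (memCset_iff hA t v).1 (Set.mem_iInter.1 hv t) with ⟨u, hu, hvu⟩
  have hu_pos : 0 < ∑ j, u j := by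
    rcases eq_or_lt_of_le (Finset.sum_nonneg fun j _ => hu j) with h | h
    · exfalso
      have hz : ∀ j, u j = 0 :=
        fun j => (Finset.sum_eq_zero_iff_of_nonneg (fun j _ => hu j)).1 h.symm j
          (Finset.mem_univ j)
      have : v = 0 := by
        rw [hvu]
        have : u = 0 := funext hz
        rw [this, Matrix.mulVec_zero]
      exact hvne this
    · exact h
  refine ⟨(∑ j, u j)⁻¹ • u, ⟨fun j => mul_nonneg (inv_nonneg.2 hu_pos.le) (hu j), ?_⟩, ?_⟩
  · rw [sum_smul_pi' (∑ j, u j)⁻¹ u]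
    field_simp
  · show projAct (pR A t) _ = _
    have hmv : pR A t *ᵥ ((∑ j, u j)⁻¹ • u) = (∑ j, u j)⁻¹ • v := by
      rw [Matrix.mulVec_smul, ← hvu]
    rw [projAct, hmv, sum_smul_pi' _ v, smul_smul]
    congr 1
    rw [mul_inv, inv_inv]
    field_simp

lemma extreme_scale {v c : Fin (n+1) → ℝ} (hv : v ∈ Set.extremePoints ℝ (Kset A))
    {b : ℝ} (hb : 0 < b) (hc : c ∈ Ccone A) (hbc : b • v - c ∈ Ccone A) :
    ∃ s : ℝ, 0 ≤ s ∧ c = s • v := by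
  have hvK : v ∈ Kset A := hv.1
  have hsv : ∑ i, v i = 1 := (Kset_subset_std hvK).2
  by_cases hc0 : c = 0
  · exact ⟨0, le_rfl, by simp [hc0]⟩
  by_cases hd0 : b • v - c = 0
  · refine ⟨b, hb.le, ?_⟩
    have := sub_eq_zero.1 hd0
    exact this.symm
  obtain ⟨hlam, hk⟩ := Ccone_sub_char hA hc hc0
  obtain ⟨hmu, hk'⟩ := Ccone_sub_char hA hbc hd0
  set lam := ∑ i, c i with hlamdef
  set mu := ∑ i, (b • v - c) i with hmudef
  have hlm : lam + mu = b := by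
    have h1 : ∑ i, (b • v - c) i = b * ∑ i, v i - ∑ i, c i := by
      simp [Finset.sum_sub_distrib, Finset.mul_sum]
    rw [hmudef, h1, hsv]
    ring
  have hvcomb : (lam / b) • (lam⁻¹ • c) + (mu / b) • (mu⁻¹ • (b • v - c)) = v := by
    funext i
    simp only [Pi.add_apply, Pi.smul_apply, smul_eq_mul, Pi.sub_apply]
    field_simp
    ring
  have hopen : v ∈ openSegment ℝ (lam⁻¹ • c) (mu⁻¹ • (b • v - c)) :=
    ⟨lam / b, mu / b, div_pos hlam hb, div_pos hmu hb,
      by rw [← add_div, hlm, div_self hb.ne'], hvcomb⟩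
  have hkeq := hv.2 hk hk' hopen
  refine ⟨lam, hlam.le, ?_⟩
  rw [← hkeq, smul_smul, mul_inv_cancel₀ hlam.ne', one_smul]

end Kcone

end Stmt1Aux

open Stmt1Aux in
theorem stmt1 (n : ℕ) (hn : 1 ≤ n) (A : ℕ → MatZ n)
    (hA : ∀ t, inSigma (A t))
    (hinf : {t : ℕ | ¬ IsPermMat (A t)}.Infinite) :
    ∃ V : Finset (Fin (n + 1) → ℝ),
      AffineIndependent ℝ (fun v : V => (v : Fin (n + 1) → ℝ)) ∧
      (⋂ t : ℕ, simg (((List.range t).map A).prod)) = convexHull ℝ (V : Set (Fin (n + 1) → ℝ)) ∧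
      V.card ≤ n := by
  classical
  obtain ⟨Q, hQnn, hQcol, hQdet, hQK⟩ := exists_limitQ hA hinf
  have hKdef : (⋂ t : ℕ, simg (((List.range t).map A).prod)) = Kset A := rfl
  rw [hKdef]
  have hKQ : Kset A = (fun μ => Q *ᵥ μ) '' stdSimplex ℝ (Fin (n + 1)) := hQK
  set col : Fin (n+1) → (Fin (n+1) → ℝ) := fun j i => Q i j with hcoldef
  have hlin : IsLinearMap ℝ (fun μ : Fin (n+1) → ℝ => Q *ᵥ μ) :=
    ⟨fun x y => Matrix.mulVec_add Q x y, fun c x => Matrix.mulVec_smul Q c x⟩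
  have hmv_basis : ∀ j : Fin (n+1), Q *ᵥ (fun k => if j = k then (1:ℝ) else 0) = col j := by
    intro j
    funext i
    simp [Matrix.mulVec, dotProduct, mul_ite, Finset.sum_ite_eq]
    rfl
  have hKhull : Kset A = convexHull ℝ (Set.range col) := by
    rw [hKQ, ← convexHull_basis_eq_stdSimplex, hlin.image_convexHull, ← Set.range_comp]
    rw [Set.range_comp]
    congr 1
    apply Set.eq_of_subset_of_subset
    · rintro v ⟨b, ⟨j, rfl⟩, rfl⟩
      refine ⟨j, ?_⟩
      funext i
      simp [Matrix.mulVec, dotProduct, mul_ite, mul_one, mul_zero, Finset.sum_ite_eq]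
      rfl
    · rintro v ⟨j, rfl⟩
      refine ⟨_, ⟨j, rfl⟩, ?_⟩
      funext i
      simp [Matrix.mulVec, dotProduct, mul_ite, mul_one, mul_zero, Finset.sum_ite_eq]
      rfl
  have hKconv : Convex ℝ (Kset A) := by
    rw [hKhull]
    exact convex_convexHull ℝ _
  have hKcomp : IsCompact (Kset A) := by
    rw [hKQ]
    exact (isCompact_stdSimplex ℝ (Fin (n+1))).image (continuous_const.matrix_mulVec continuous_id)
  set E := Set.extremePoints ℝ (Kset A) with hEdef
  have hEsub : E ⊆ Set.range col := by
    rw [hEdef, hKhull]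
    exact extremePoints_convexHull_subset
  have hEfin : E.Finite := (Set.finite_range col).subset hEsub
  set V : Finset (Fin (n+1) → ℝ) := hEfin.toFinset with hVdef
  have hVcoe : (V : Set (Fin (n+1) → ℝ)) = E := Set.Finite.coe_toFinset hEfin
  have hKE : convexHull ℝ E = Kset A := by
    have h1 := closure_convexHull_extremePoints hKcomp hKconv
    have h2 : IsClosed (convexHull ℝ E) := hEfin.isClosed_convexHull ℝ
    rw [← hEdef] at h1
    rw [← h1, h2.closure_eq]
  have hVE : ∀ i : V, (↑i : Fin (n+1) → ℝ) ∈ E := by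
    intro i
    rw [← hVcoe]
    exact i.2
  have hVK : ∀ i : V, (↑i : Fin (n+1) → ℝ) ∈ Kset A := fun i =>
    extremePoints_subset (hVE i)
  have hVC : ∀ i : V, (↑i : Fin (n+1) → ℝ) ∈ Ccone A := fun i =>
    Kset_subset_Ccone hA (hVK i)
  -- key claim: no positive weights in a vanishing affine combination on V
  have key : ∀ (w : V → ℝ) (s : Finset V), s.sum w = 0 →
      (∑ e ∈ s, w e • (e : Fin (n+1) → ℝ)) = 0 → ∀ e ∈ s, ¬ (0 < w e) := by
    intro w s hw0 hwsum e he hwe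
    set I := s.filter (fun i => 0 < w i) with hIdef
    set J := s.filter (fun i => w i < 0) with hJdef
    have heI : e ∈ I := Finset.mem_filter.2 ⟨he, hwe⟩
    have hJsub : J ⊆ s.filter (fun i => ¬ 0 < w i) := by
      intro i hi
      rcases Finset.mem_filter.1 hi with ⟨hi1, hi2⟩
      exact Finset.mem_filter.2 ⟨hi1, by linarith⟩
    have hsplitv : ∑ i ∈ I, w i • (i : Fin (n+1) → ℝ)
        + ∑ i ∈ J, w i • (i : Fin (n+1) → ℝ) = 0 := by
      rw [← hwsum, ← Finset.sum_filter_add_sum_filter_not s (fun i => 0 < w i)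
        (fun i => w i • (i : Fin (n+1) → ℝ))]
      congr 1
      refine Finset.sum_subset hJsub ?_
      intro i hi1 hi2
      have h1 : ¬ 0 < w i := (Finset.mem_filter.1 hi1).2
      have h2 : ¬ w i < 0 := fun h => hi2 (Finset.mem_filter.2 ⟨(Finset.mem_filter.1 hi1).1, h⟩)
      have h3 : w i = 0 := by linarith [not_lt.1 h1, not_lt.1 h2]
      rw [h3, zero_smul]
    have hsplits : ∑ i ∈ I, w i + ∑ i ∈ J, w i = 0 := by
      rw [← hw0, ← Finset.sum_filter_add_sum_filter_not s (fun i => 0 < w i) w]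
      congr 1
      refine Finset.sum_subset hJsub ?_
      intro i hi1 hi2
      have h1 : ¬ 0 < w i := (Finset.mem_filter.1 hi1).2
      have h2 : ¬ w i < 0 := fun h => hi2 (Finset.mem_filter.2 ⟨(Finset.mem_filter.1 hi1).1, h⟩)
      linarith [not_lt.1 h1, not_lt.1 h2]
    set x := ∑ j ∈ J, (-w j) • (j : Fin (n+1) → ℝ) with hxdef
    have hxI : ∑ i ∈ I, w i • (i : Fin (n+1) → ℝ) = x := by
      have h1 : ∑ i ∈ I, w i • (i : Fin (n+1) → ℝ)
          = -∑ j ∈ J, w j • (j : Fin (n+1) → ℝ) :=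
        eq_neg_of_add_eq_zero_left hsplitv
      rw [h1, hxdef, ← Finset.sum_neg_distrib]
      exact Finset.sum_congr rfl fun j _ => (neg_smul _ _).symm
    have hyC : ∀ j ∈ J, (-w j) • (j : Fin (n+1) → ℝ) ∈ Ccone A := by
      intro j hj
      have hwj : w j < 0 := (Finset.mem_filter.1 hj).2
      exact Ccone_smul hA (by linarith) (hVC j)
    have hzC : w e • (e : Fin (n+1) → ℝ) ∈ Ccone A := Ccone_smul hA hwe.le (hVC e)
    have hxzC : x - w e • (e : Fin (n+1) → ℝ) ∈ Ccone A := by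
      have h1 : x - w e • (e : Fin (n+1) → ℝ)
          = ∑ i ∈ I.erase e, w i • (i : Fin (n+1) → ℝ) := by
        rw [← hxI, ← Finset.add_sum_erase I (fun i => w i • (i : Fin (n+1) → ℝ)) heI]
        abel
      rw [h1]
      refine Ccone_sum hA _ _ fun i hi => ?_
      have hiI : i ∈ I := Finset.mem_of_mem_erase hi
      exact Ccone_smul hA (Finset.mem_filter.1 hiI).2.le (hVC i)
    obtain ⟨c, hc, hzsum⟩ := riesz_decomp hA J (fun j => (-w j) • (j : Fin (n+1) → ℝ))
      hyC (w e • (e : Fin (n+1) → ℝ)) hzC (by rw [← hxdef]; exact hxzC)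
    have hscale : ∀ j ∈ J, ∃ sc : ℝ, 0 ≤ sc ∧ c j = sc • (j : Fin (n+1) → ℝ) := by
      intro j hj
      have hbj : 0 < -w j := by
        have := (Finset.mem_filter.1 hj).2
        linarith
      exact extreme_scale hA (hVE j) hbj (hc j hj).1 (hc j hj).2
    choose! ts hts0 htseq using hscale
    have hcomb : w e • (e : Fin (n+1) → ℝ) = ∑ j ∈ J, ts j • (j : Fin (n+1) → ℝ) := by
      rw [hzsum]
      exact Finset.sum_congr rfl fun j hj => htseq j hj
    have hsum1 : ∀ i : V, ∑ k, (i : Fin (n+1) → ℝ) k = 1 := fun i => (Kset_subset_std (hVK i)).2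
    have hwe_sum : w e = ∑ j ∈ J, ts j := by
      have h1 := congrArg (fun v : Fin (n+1) → ℝ => ∑ k, v k) hcomb
      rw [sum_smul_pi', hsum1 e, mul_one] at h1
      have h2 : ∑ k, (∑ j ∈ J, ts j • (j : Fin (n+1) → ℝ)) k = ∑ j ∈ J, ts j := by
        calc ∑ k, (∑ j ∈ J, ts j • (j : Fin (n+1) → ℝ)) k
            = ∑ k, ∑ j ∈ J, (ts j • (j : Fin (n+1) → ℝ)) k := by
              refine Finset.sum_congr rfl fun k _ => ?_
              rw [Finset.sum_apply]
        _ = ∑ j ∈ J, ∑ k, (ts j • (j : Fin (n+1) → ℝ)) k := Finset.sum_comm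
        _ = ∑ j ∈ J, ts j := by
              refine Finset.sum_congr rfl fun j hj => ?_
              rw [sum_smul_pi', hsum1 j, mul_one]
      rw [h2] at h1
      exact h1
    have hwsumpos : 0 < ∑ j ∈ J, ts j := by
      rw [← hwe_sum]
      exact hwe
    have hmemhull : (e : Fin (n+1) → ℝ)
        ∈ convexHull ℝ ((fun j : V => (j : Fin (n+1) → ℝ)) '' ↑J) := by
      have hcm := Finset.centerMass_mem_convexHull J (fun j hj => hts0 j hj) hwsumpos
        (z := fun j : V => (j : Fin (n+1) → ℝ))
        (fun j hj => Set.mem_image_of_mem _ (Finset.mem_coe.2 hj))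
      have hcme : J.centerMass ts (fun j : V => (j : Fin (n+1) → ℝ)) = (e : Fin (n+1) → ℝ) := by
        rw [Finset.centerMass, ← hwe_sum, ← hcomb, smul_smul,
          inv_mul_cancel₀ (ne_of_gt hwe), one_smul]
      rwa [hcme] at hcm
    have hSsub : (fun j : V => (j : Fin (n+1) → ℝ)) '' ↑J ⊆ Kset A := by
      rintro _ ⟨j, _, rfl⟩
      exact hVK j
    have hhullsub : convexHull ℝ ((fun j : V => (j : Fin (n+1) → ℝ)) '' ↑J) ⊆ Kset A :=
      convexHull_min hSsub hKconv
    have hext2 : (e : Fin (n+1) → ℝ)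
        ∈ Set.extremePoints ℝ (convexHull ℝ ((fun j : V => (j : Fin (n+1) → ℝ)) '' ↑J)) := by
      refine ⟨hmemhull, ?_⟩
      intro x1 hx1 x2 hx2 hseg
      exact (hVE e).2 (hhullsub hx1) (hhullsub hx2) hseg
    have heJ : (e : Fin (n+1) → ℝ) ∈ (fun j : V => (j : Fin (n+1) → ℝ)) '' ↑J :=
      extremePoints_convexHull_subset hext2
    rcases heJ with ⟨j, hjJ, hje⟩
    have hjeq : j = e := Subtype.coe_injective hje
    rw [hjeq] at hjJ
    have : w e < 0 := (Finset.mem_filter.1 (Finset.mem_coe.1 hjJ)).2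
    linarith
  -- affine independence
  have haff : AffineIndependent ℝ (fun v : V => (v : Fin (n+1) → ℝ)) := by
    rw [affineIndependent_iff]
    intro s w hw0 hwsum e he
    by_contra hwne
    rcases lt_or_gt_of_ne hwne with hlt | hgt
    · have h1 : s.sum (fun i => -w i) = 0 := by
        rw [Finset.sum_neg_distrib, hw0, neg_zero]
      have h2 : ∑ i ∈ s, (-w i) • (i : Fin (n+1) → ℝ) = 0 := by
        have : ∑ i ∈ s, (-w i) • (i : Fin (n+1) → ℝ)
            = -∑ i ∈ s, w i • (i : Fin (n+1) → ℝ) := by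
          rw [← Finset.sum_neg_distrib]
          exact Finset.sum_congr rfl fun i _ => neg_smul _ _
        rw [this, hwsum, neg_zero]
      exact key (fun i => -w i) s h1 h2 e he (by show (0:ℝ) < -w e; linarith)
    · exact key w s hw0 hwsum e he hgt
  -- cardinality bound
  have hcard : V.card ≤ n := by
    by_contra hbig
    push_neg at hbig
    obtain ⟨cv, hcvne, hQcv⟩ : ∃ v, v ≠ 0 ∧ Q *ᵥ v = 0 :=
      Matrix.exists_mulVec_eq_zero_iff.2 hQdet
    have hsumcv : ∑ j, cv j = 0 := by
      have h1 := congrArg (fun v : Fin (n+1) → ℝ => ∑ i, v i) hQcv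
      rw [sum_mulVec] at h1
      have h2 : ∑ j, (∑ i, Q i j) * cv j = ∑ j, cv j := by
        refine Finset.sum_congr rfl fun j _ => ?_
        rw [hQcol j, one_mul]
      rw [h2] at h1
      simpa using h1
    have hQc_smul : ∑ j, cv j • col j = 0 := by
      funext i
      rw [Finset.sum_apply]
      have h1 : (Q *ᵥ cv) i = 0 := by rw [hQcv]; rfl
      simp only [Matrix.mulVec, dotProduct] at h1
      calc ∑ j, (cv j • col j) i = ∑ j, Q i j * cv j := by
            refine Finset.sum_congr rfl fun j _ => ?_
            simp [hcoldef, mul_comm]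
      _ = 0 := h1
      -- then Pi.zero_apply
    have hdep : ∑ j, cv j • (col j - col 0) = 0 := by
      have h0 : ∑ j, cv j • (col j - col 0) = ∑ j, (cv j • col j - cv j • col 0) := by
        refine Finset.sum_congr rfl fun j _ => ?_
        rw [smul_sub]
      rw [h0, Finset.sum_sub_distrib, hQc_smul, ← Finset.sum_smul, hsumcv, zero_smul, sub_zero]
    have hexj : ∃ j : Fin (n+1), j ≠ 0 ∧ cv j ≠ 0 := by
      by_contra h
      push_neg at h
      apply hcvne
      funext j
      by_cases hj : j = 0
      · subst hj
        have h1 : ∑ k, cv k = cv 0 + ∑ k ∈ Finset.univ.erase 0, cv k :=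
          (Finset.add_sum_erase Finset.univ cv (Finset.mem_univ 0)).symm
        have h2 : ∑ k ∈ Finset.univ.erase 0, cv k = 0 :=
          Finset.sum_eq_zero fun k hk => h k (Finset.mem_erase.1 hk).1
        rw [h2, add_zero] at h1
        rw [← h1, hsumcv]
        rfl
      · exact h j hj
    set g : {j : Fin (n+1) // j ≠ 0} → (Fin (n+1) → ℝ) := fun j => col j - col 0 with hgdef
    have hdep' : ∑ j : {j : Fin (n+1) // j ≠ 0}, cv ↑j • g j = 0 := by
      have hsub : ∑ j ∈ Finset.univ.filter (fun j : Fin (n+1) => j ≠ 0), cv j • (col j - col 0)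
          = ∑ j : {j : Fin (n+1) // j ≠ 0}, cv ↑j • (col ↑j - col 0) :=
        Finset.sum_subtype _ (by simp) _
      have h1 : ∑ j ∈ Finset.univ.filter (fun j : Fin (n+1) => ¬ j ≠ 0),
          cv j • (col j - col 0) = 0 := by
        refine Finset.sum_eq_zero fun j hj => ?_
        have hj0 : j = 0 := by simpa using (Finset.mem_filter.1 hj).2
        rw [hj0, sub_self, smul_zero]
      have h2 := Finset.sum_filter_add_sum_filter_not Finset.univ
        (fun j : Fin (n+1) => j ≠ 0) (fun j => cv j • (col j - col 0))
      rw [h1, add_zero] at h2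
      show ∑ j : {j : Fin (n+1) // j ≠ 0}, cv ↑j • (col ↑j - col 0) = 0
      rw [← hsub, h2]
      exact hdep
    have hnli : ¬ LinearIndependent ℝ g := by
      intro hli
      rcases hexj with ⟨j1, hj1, hcvj1⟩
      exact hcvj1 (Fintype.linearIndependent_iff.1 hli (fun j => cv j) hdep' ⟨j1, hj1⟩)
    have hcardsub : Fintype.card {j : Fin (n+1) // j ≠ 0} = n := by
      have h1 : Fintype.card {j : Fin (n+1) // ¬ j = 0}
          = Fintype.card (Fin (n+1)) - Fintype.card {j : Fin (n+1) // j = 0} :=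
        Fintype.card_subtype_compl _
      have h2 : Fintype.card {j : Fin (n+1) // j = 0} = 1 := Fintype.card_subtype_eq 0
      rw [h2, Fintype.card_fin] at h1
      exact h1
    have hfr1 : Module.finrank ℝ (Submodule.span ℝ (Set.range g)) ≠ n := by
      intro hfr
      apply hnli
      rw [linearIndependent_iff_card_eq_finrank_span, hcardsub]
      exact hfr.symm
    have hfr2 : Module.finrank ℝ (Submodule.span ℝ (Set.range g)) ≤ n := by
      have h1 := finrank_span_le_card (R := ℝ) (Set.range g)
      have h2 : (Set.range g).toFinset.card ≤ n := by
        rw [Set.toFinset_range]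
        calc (Finset.univ.image g).card ≤ Finset.univ.card := Finset.card_image_le
        _ = n := by rw [Finset.card_univ, hcardsub]
      exact le_trans h1 h2
    have hfrlt : Module.finrank ℝ (Submodule.span ℝ (Set.range g)) < n := lt_of_le_of_ne hfr2 hfr1
    have hvs : vectorSpan ℝ (Set.range col) = Submodule.span ℝ (Set.range g) := by
      rw [vectorSpan_range_eq_span_range_vsub_right ℝ col 0]
      apply le_antisymm
      · rw [Submodule.span_le]
        rintro v ⟨j, rfl⟩
        by_cases hj : j = 0
        · have hv : (fun i => col i -ᵥ col 0) j = 0 := by simp [hj, vsub_eq_sub]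
          rw [hv]
          exact Submodule.zero_mem _
        · have hv : (fun i => col i -ᵥ col 0) j = g ⟨j, hj⟩ := by simp [hgdef, vsub_eq_sub]
          rw [hv]
          exact Submodule.subset_span (Set.mem_range_self _)
      · rw [Submodule.span_le]
        rintro v ⟨j, rfl⟩
        have hv : g j = (fun i => col i -ᵥ col 0) (↑j : Fin (n+1)) := by
          simp [hgdef, vsub_eq_sub]
        rw [hv]
        exact Submodule.subset_span (Set.mem_range_self _)
    have hVsub : (V : Set (Fin (n+1) → ℝ)) ⊆ Set.range col := by
      rw [hVcoe]
      exact hEsub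
    have hfle : Module.finrank ℝ (vectorSpan ℝ (V : Set (Fin (n+1) → ℝ)))
        ≤ Module.finrank ℝ (vectorSpan ℝ (Set.range col)) :=
      Submodule.finrank_mono (vectorSpan_mono ℝ hVsub)
    have hfV : Module.finrank ℝ (vectorSpan ℝ (Set.range (fun v : V => (v : Fin (n+1) → ℝ))))
        = V.card - 1 := haff.finrank_vectorSpan (by rw [Fintype.card_coe]; omega)
    have hrange : Set.range (fun v : V => (v : Fin (n+1) → ℝ))
        = (V : Set (Fin (n+1) → ℝ)) := Subtype.range_coe
    rw [hrange] at hfV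
    rw [hvs] at hfle
    omega
  exact ⟨V, haff, by rw [hVcoe]; exact hKE.symm, hcard⟩
end

section
/- For n = 1 every iterated function system of the considered form is topologically contractive: if A_0, …, A_{m−1} ∈ Σ (with m ≥ 1) are matrices none of which is a permutation matrix, then for every sequence a ∈ {0,…,m−1}^ℕ the intersection over t ≥ 0 of the sets (A_{a_0} A_{a_1} ⋯ A_{a_{t−1}})[Δ] is a singleton. -/
open Matrix

section Aux

lemma fin2_cases (j : Fin 2) : j = 0 ∨ j = 1 := by
  have : ∀ k : Fin 2, k = 0 ∨ k = 1 := by decide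
  exact this j

lemma my_det (B : MatZ 1) (h : inSigma B) :
    B 0 0 * B 1 1 - B 0 1 * B 1 0 = 1 ∨ B 0 0 * B 1 1 - B 0 1 * B 1 0 = -1 := by
  have := h.1
  rw [Matrix.det_fin_two] at this
  exact Int.isUnit_iff.mp this

lemma colsum_ge (B : MatZ 1) (h : inSigma B) (j : Fin 2) : 1 ≤ B 0 j + B 1 j := by
  by_contra hc
  push_neg at hc
  have h0 : B 0 j = 0 := le_antisymm (by have := h.2 0 j; have := h.2 1 j; omega) (h.2 0 j)
  have h1 : B 1 j = 0 := le_antisymm (by have := h.2 0 j; have := h.2 1 j; omega) (h.2 1 j)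
  have hd := my_det B h
  rcases fin2_cases j with rfl | rfl <;> rw [h0, h1] at hd <;> simp at hd

lemma rowsum_ge (B : MatZ 1) (h : inSigma B) (i : Fin 2) : 1 ≤ B i 0 + B i 1 := by
  by_contra hc
  push_neg at hc
  have h0 : B i 0 = 0 := le_antisymm (by have := h.2 i 0; have := h.2 i 1; omega) (h.2 i 0)
  have h1 : B i 1 = 0 := le_antisymm (by have := h.2 i 0; have := h.2 i 1; omega) (h.2 i 1)
  have hd := my_det B h
  rcases fin2_cases i with rfl | rfl <;> rw [h0, h1] at hd <;> simp at hd

lemma totsum_ge (B : MatZ 1) (h : inSigma B) (hnp : ¬ IsPermMat B) :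
    3 ≤ B 0 0 + B 0 1 + B 1 0 + B 1 1 := by
  by_contra hc
  push_neg at hc
  have c0 := colsum_ge B h 0
  have c1 := colsum_ge B h 1
  have r0 := rowsum_ge B h 0
  have r1 := rowsum_ge B h 1
  have n00 := h.2 0 0; have n01 := h.2 0 1; have n10 := h.2 1 0; have n11 := h.2 1 1
  have hcase : (B 0 0 = 1 ∧ B 0 1 = 0 ∧ B 1 0 = 0 ∧ B 1 1 = 1) ∨
      (B 0 0 = 0 ∧ B 0 1 = 1 ∧ B 1 0 = 1 ∧ B 1 1 = 0) := by omega
  apply hnp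
  rcases hcase with ⟨e1, e2, e3, e4⟩ | ⟨e1, e2, e3, e4⟩
  · exact ⟨1, by intro i j; fin_cases i <;> fin_cases j <;> simp [e1, e2, e3, e4]⟩
  · exact ⟨Equiv.swap 0 1, by
      intro i j; fin_cases i <;> fin_cases j <;>
        simp [e1, e2, e3, e4, Equiv.swap_apply_def]⟩

lemma inSigma_one : inSigma (1 : MatZ 1) := by
  constructor
  · simp
  · intro i j
    by_cases hij : i = j <;> simp [Matrix.one_apply, hij]

lemma inSigma_mul (B C : MatZ 1) (hB : inSigma B) (hC : inSigma C) : inSigma (B * C) := by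
  constructor
  · rw [Matrix.det_mul]; exact hB.1.mul hC.1
  · intro i j
    rw [Matrix.mul_apply]
    exact Finset.sum_nonneg fun k _ => mul_nonneg (hB.2 i k) (hC.2 k j)

lemma mul_entry (B C : MatZ 1) (i j : Fin 2) :
    (B * C) i j = B i 0 * C 0 j + B i 1 * C 1 j := by
  rw [Matrix.mul_apply, Fin.sum_univ_two]

-- real-side helpers
lemma mulVec_apply' (B : MatZ 1) (x : Fin 2 → ℝ) (i : Fin 2) :
    (toR B *ᵥ x) i = (B i 0 : ℝ) * x 0 + (B i 1 : ℝ) * x 1 := by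
  simp [toR, Matrix.mulVec, dotProduct, Fin.sum_univ_two, Matrix.map_apply]

lemma sumS (B : MatZ 1) (x : Fin 2 → ℝ) :
    (∑ i, (toR B *ᵥ x) i) =
      ((B 0 0 : ℝ) + B 1 0) * x 0 + ((B 0 1 : ℝ) + B 1 1) * x 1 := by
  rw [Fin.sum_univ_two, mulVec_apply', mulVec_apply']; ring

lemma mem_simplex_iff (x : Fin 2 → ℝ) :
    x ∈ stdSimplex ℝ (Fin 2) ↔ (0 ≤ x 0 ∧ 0 ≤ x 1) ∧ x 0 + x 1 = 1 := by
  constructor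
  · rintro ⟨h1, h2⟩
    exact ⟨⟨h1 0, h1 1⟩, by rw [← Fin.sum_univ_two x]; exact h2⟩
  · rintro ⟨⟨h0, h1⟩, hs⟩
    refine ⟨fun i => ?_, by rw [Fin.sum_univ_two]; exact hs⟩
    fin_cases i <;> assumption

lemma S_ge_one (B : MatZ 1) (hB : inSigma B) (x : Fin 2 → ℝ)
    (hx : x ∈ stdSimplex ℝ (Fin 2)) : 1 ≤ ∑ i, (toR B *ᵥ x) i := by
  rw [mem_simplex_iff] at hx
  obtain ⟨⟨h0, h1⟩, hs⟩ := hx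
  rw [sumS]
  have c0 : (1 : ℝ) ≤ (B 0 0 : ℝ) + B 1 0 := by exact_mod_cast colsum_ge B hB 0
  have c1 : (1 : ℝ) ≤ (B 0 1 : ℝ) + B 1 1 := by exact_mod_cast colsum_ge B hB 1
  nlinarith

lemma projAct_mem (B : MatZ 1) (hB : inSigma B) (x : Fin 2 → ℝ)
    (hx : x ∈ stdSimplex ℝ (Fin 2)) : projAct (toR B) x ∈ stdSimplex ℝ (Fin 2) := by
  have hS := S_ge_one B hB x hx
  have hSpos : (0:ℝ) < ∑ i, (toR B *ᵥ x) i := lt_of_lt_of_le one_pos hS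
  rw [mem_simplex_iff] at hx ⊢
  obtain ⟨⟨h0, h1⟩, hs⟩ := hx
  have hnn : ∀ i, 0 ≤ (∑ i, (toR B *ᵥ x) i)⁻¹ * (toR B *ᵥ x) i := by
    intro i
    apply mul_nonneg (le_of_lt (inv_pos.mpr hSpos))
    rw [mulVec_apply']
    have e0 : (0:ℝ) ≤ (B i 0 : ℝ) := by exact_mod_cast hB.2 i 0
    have e1 : (0:ℝ) ≤ (B i 1 : ℝ) := by exact_mod_cast hB.2 i 1
    nlinarith
  constructor
  · exact ⟨hnn 0, hnn 1⟩
  · show (∑ i, (toR B *ᵥ x) i)⁻¹ * _ + (∑ i, (toR B *ᵥ x) i)⁻¹ * _ = 1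
    rw [← mul_add, ← Fin.sum_univ_two (toR B *ᵥ x), inv_mul_cancel₀ (ne_of_gt hSpos)]

lemma projAct_smul (M : Matrix (Fin 2) (Fin 2) ℝ) (c : ℝ) (hc : c ≠ 0) (v : Fin 2 → ℝ) :
    projAct M (c • v) = projAct M v := by
  funext i
  have h1 : M *ᵥ (c • v) = c • (M *ᵥ v) := Matrix.mulVec_smul M c v
  show (∑ i, (M *ᵥ (c • v)) i)⁻¹ * (M *ᵥ (c • v)) i = (∑ i, (M *ᵥ v) i)⁻¹ * (M *ᵥ v) i
  rw [h1]
  have h2 : (∑ j, (c • (M *ᵥ v)) j) = c * ∑ j, (M *ᵥ v) j := by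
    rw [Finset.mul_sum]; rfl
  rw [h2]
  show (c * _)⁻¹ * (c * _) = _
  rw [mul_inv]
  have : c⁻¹ * (∑ j, (M *ᵥ v) j)⁻¹ * (c * (M *ᵥ v) i)
      = (c⁻¹ * c) * ((∑ j, (M *ᵥ v) j)⁻¹ * (M *ᵥ v) i) := by ring
  rw [this, inv_mul_cancel₀ hc, one_mul]

lemma toR_mul (B C : MatZ 1) : toR (B * C) = toR B * toR C := by
  ext i j
  simp [toR, Matrix.mul_apply, Matrix.map_apply]

lemma simg_mul_subset (B C : MatZ 1) (hB : inSigma B) (hC : inSigma C) :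
    simg (B * C) ⊆ simg B := by
  rintro _ ⟨x, hx, rfl⟩
  refine ⟨projAct (toR C) x, projAct_mem C hC x hx, ?_⟩
  have hS := S_ge_one C hC x hx
  have hSne : (∑ i, (toR C *ᵥ x) i) ≠ 0 := by linarith
  show projAct (toR B) ((∑ i, (toR C *ᵥ x) i)⁻¹ • (toR C *ᵥ x)) = projAct (toR (B * C)) x
  rw [projAct_smul _ _ (inv_ne_zero hSne), toR_mul]
  unfold projAct
  rw [← Matrix.mulVec_mulVec]

lemma simg_subset_simplex (B : MatZ 1) (hB : inSigma B) :
    simg B ⊆ stdSimplex ℝ (Fin 2) := by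
  rintro _ ⟨x, hx, rfl⟩
  exact projAct_mem B hB x hx

-- the key distance bound
set_option maxHeartbeats 1000000 in
lemma dist_bound (B : MatZ 1) (hB : inSigma B) (x y : Fin 2 → ℝ)
    (hx : x ∈ stdSimplex ℝ (Fin 2)) (hy : y ∈ stdSimplex ℝ (Fin 2)) :
    |projAct (toR B) x 0 - projAct (toR B) y 0| ≤
      1 / (((B 0 0 : ℝ) + B 1 0) * ((B 0 1 : ℝ) + B 1 1)) := by
  have hSx := S_ge_one B hB x hx
  have hSy := S_ge_one B hB y hy
  have c0 : (1 : ℝ) ≤ (B 0 0 : ℝ) + B 1 0 := by exact_mod_cast colsum_ge B hB 0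
  have c1 : (1 : ℝ) ≤ (B 0 1 : ℝ) + B 1 1 := by exact_mod_cast colsum_ge B hB 1
  rw [mem_simplex_iff] at hx hy
  obtain ⟨⟨hx0, hx1⟩, hxs⟩ := hx
  obtain ⟨⟨hy0, hy1⟩, hys⟩ := hy
  set Sx := ∑ i, (toR B *ᵥ x) i with hSxdef
  set Sy := ∑ i, (toR B *ᵥ y) i with hSydef
  have hSxpos : (0:ℝ) < Sx := lt_of_lt_of_le one_pos hSx
  have hSypos : (0:ℝ) < Sy := lt_of_lt_of_le one_pos hSy
  have e1 : projAct (toR B) x 0 = ((B 0 0 : ℝ) * x 0 + (B 0 1 : ℝ) * x 1) / Sx := by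
    show Sx⁻¹ * (toR B *ᵥ x) 0 = _
    rw [mulVec_apply', inv_mul_eq_div]
  have e2 : projAct (toR B) y 0 = ((B 0 0 : ℝ) * y 0 + (B 0 1 : ℝ) * y 1) / Sy := by
    show Sy⁻¹ * (toR B *ᵥ y) 0 = _
    rw [mulVec_apply', inv_mul_eq_div]
  rw [e1, e2, div_sub_div _ _ (ne_of_gt hSxpos) (ne_of_gt hSypos), abs_div,
    abs_of_pos (mul_pos hSxpos hSypos)]
  have hdet := my_det B hB
  have hdetR : |(B 0 0 : ℝ) * B 1 1 - (B 0 1 : ℝ) * B 1 0| = 1 := by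
    rcases hdet with hd | hd
    · have : (B 0 0 : ℝ) * B 1 1 - (B 0 1 : ℝ) * B 1 0 = 1 := by exact_mod_cast hd
      rw [this]; norm_num
    · have : (B 0 0 : ℝ) * B 1 1 - (B 0 1 : ℝ) * B 1 0 = -1 := by exact_mod_cast hd
      rw [this]; norm_num
  have hnum : ((B 0 0 : ℝ) * x 0 + (B 0 1 : ℝ) * x 1) * Sy -
      Sx * ((B 0 0 : ℝ) * y 0 + (B 0 1 : ℝ) * y 1) =
      ((B 0 0 : ℝ) * B 1 1 - (B 0 1 : ℝ) * B 1 0) * (x 0 * y 1 - x 1 * y 0) := by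
    rw [hSxdef, hSydef, sumS, sumS]; ring
  rw [div_le_div_iff₀ (mul_pos hSxpos hSypos)
    (by nlinarith : (0:ℝ) < ((B 0 0 : ℝ) + B 1 0) * ((B 0 1 : ℝ) + B 1 1))]
  rw [hnum, abs_mul, hdetR, one_mul]
  have habs : |x 0 * y 1 - x 1 * y 0| ≤ x 0 * y 1 + x 1 * y 0 := by
    rw [abs_le]
    constructor <;> nlinarith
  have hSS : ((B 0 0 : ℝ) + B 1 0) * ((B 0 1 : ℝ) + B 1 1) * (x 0 * y 1 + x 1 * y 0)
      ≤ Sx * Sy := by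
    have e00 : (0:ℝ) ≤ (B 0 0 : ℝ) := by exact_mod_cast hB.2 0 0
    have e01 : (0:ℝ) ≤ (B 0 1 : ℝ) := by exact_mod_cast hB.2 0 1
    have e10 : (0:ℝ) ≤ (B 1 0 : ℝ) := by exact_mod_cast hB.2 1 0
    have e11 : (0:ℝ) ≤ (B 1 1 : ℝ) := by exact_mod_cast hB.2 1 1
    rw [hSxdef, hSydef, sumS, sumS]
    nlinarith [mul_nonneg (mul_nonneg hx0 hy0) (sq_nonneg ((B 0 0 : ℝ) + B 1 0)),
      mul_nonneg (mul_nonneg hx1 hy1) (sq_nonneg ((B 0 1 : ℝ) + B 1 1))]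
  calc |x 0 * y 1 - x 1 * y 0| * (((B 0 0 : ℝ) + B 1 0) * ((B 0 1 : ℝ) + B 1 1))
      ≤ (x 0 * y 1 + x 1 * y 0) * (((B 0 0 : ℝ) + B 1 0) * ((B 0 1 : ℝ) + B 1 1)) := by
        apply mul_le_mul_of_nonneg_right habs; nlinarith
    _ ≤ Sx * Sy := by nlinarith
    _ = 1 * (Sx * Sy) := by ring

end Aux

lemma simg_compact (B : MatZ 1) (hB : inSigma B) : IsCompact (simg B) := by
  apply (isCompact_stdSimplex ℝ (Fin 2)).image_of_continuousOn
  have hmv : Continuous fun x : Fin 2 → ℝ => toR B *ᵥ x :=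
    continuous_const.matrix_mulVec continuous_id
  have hsum : Continuous fun x : Fin 2 → ℝ => ∑ i, (toR B *ᵥ x) i :=
    continuous_finset_sum _ fun i _ => (continuous_apply i).comp hmv
  apply ContinuousOn.smul (f := fun x => (∑ i, (toR B *ᵥ x) i)⁻¹) (g := fun x => toR B *ᵥ x)
  · apply ContinuousOn.inv₀ hsum.continuousOn
    intro x hx
    have := S_ge_one B hB x hx
    intro h; rw [h] at this; linarith
  · exact hmv.continuousOn

theorem stmt2 (m : ℕ) (hm : 1 ≤ m) (A : Fin m → MatZ 1)
    (hA : ∀ k, inSigma (A k)) (hnp : ∀ k, ¬ IsPermMat (A k))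
    (a : ℕ → Fin m) :
    ∃ p, (⋂ t : ℕ, simg (((List.range t).map (fun s => A (a s))).prod)) = {p} := by
  set P : ℕ → MatZ 1 := fun t => ((List.range t).map (fun s => A (a s))).prod with hPdef
  have hP0 : P 0 = 1 := by simp [hPdef]
  have hPsucc : ∀ t, P (t + 1) = P t * A (a t) := by
    intro t; simp [hPdef, List.range_succ]
  have hPin : ∀ t, inSigma (P t) := by
    intro t; induction t with
    | zero => rw [hP0]; exact inSigma_one
    | succ t ih => rw [hPsucc]; exact inSigma_mul _ _ ih (hA _)
  have hgrow : ∀ t, 1 ≤ P t 0 0 + P t 1 0 ∧ 1 ≤ P t 0 1 + P t 1 1 ∧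
      (t : ℤ) + 2 ≤ (P t 0 0 + P t 1 0) + (P t 0 1 + P t 1 1) := by
    intro t; induction t with
    | zero =>
      rw [hP0]
      norm_num [Matrix.one_apply]
    | succ t ih =>
      obtain ⟨i0, i1, isum⟩ := ih
      have r0 := rowsum_ge (A (a t)) (hA _) 0
      have r1 := rowsum_ge (A (a t)) (hA _) 1
      have ct0 := colsum_ge (A (a t)) (hA _) 0
      have ct1 := colsum_ge (A (a t)) (hA _) 1
      have tot := totsum_ge (A (a t)) (hA _) (hnp _)
      have n00 := (hA (a t)).2 0 0
      have n01 := (hA (a t)).2 0 1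
      have n10 := (hA (a t)).2 1 0
      have n11 := (hA (a t)).2 1 1
      have q00 := (hPin t).2 0 0
      have q01 := (hPin t).2 0 1
      have q10 := (hPin t).2 1 0
      have q11 := (hPin t).2 1 1
      rw [hPsucc t, mul_entry, mul_entry, mul_entry, mul_entry]
      push_cast
      refine ⟨?_, ?_, ?_⟩
      · nlinarith [mul_nonneg (by linarith : (0:ℤ) ≤ P t 0 0 + P t 1 0 - 1) n00,
          mul_nonneg (by linarith : (0:ℤ) ≤ P t 0 1 + P t 1 1 - 1) n10]
      · nlinarith [mul_nonneg (by linarith : (0:ℤ) ≤ P t 0 0 + P t 1 0 - 1) n01,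
          mul_nonneg (by linarith : (0:ℤ) ≤ P t 0 1 + P t 1 1 - 1) n11]
      · nlinarith [mul_nonneg (by linarith : (0:ℤ) ≤ P t 0 0 + P t 1 0 - 1)
          (by linarith : (0:ℤ) ≤ A (a t) 0 0 + A (a t) 0 1 - 1),
          mul_nonneg (by linarith : (0:ℤ) ≤ P t 0 1 + P t 1 1 - 1)
          (by linarith : (0:ℤ) ≤ A (a t) 1 0 + A (a t) 1 1 - 1)]
  have hsub : ∀ t, simg (P (t + 1)) ⊆ simg (P t) := by
    intro t
    rw [hPsucc]
    exact simg_mul_subset _ _ (hPin t) (hA _)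
  have hcpt : ∀ t, IsCompact (simg (P t)) := fun t => simg_compact _ (hPin t)
  have hnem : ∀ t, (simg (P t)).Nonempty := by
    intro t
    refine ⟨_, ⟨fun _ => (2:ℝ)⁻¹, ?_, rfl⟩⟩
    rw [mem_simplex_iff]
    norm_num
  have hI : (⋂ t, simg (P t)).Nonempty :=
    IsCompact.nonempty_iInter_of_sequence_nonempty_isCompact_isClosed _ hsub hnem (hcpt 0)
      (fun t => (hcpt t).isClosed)
  obtain ⟨p, hp⟩ := hI
  refine ⟨p, ?_⟩
  have key : ∀ q, q ∈ (⋂ t, simg (P t)) → q = p := by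
    intro q hq
    have hd0 : ∀ t : ℕ, |q 0 - p 0| ≤ 2 / ((t : ℝ) + 2) := by
      intro t
      obtain ⟨x, hx, hxe⟩ := Set.mem_iInter.mp hq t
      obtain ⟨y, hy, hye⟩ := Set.mem_iInter.mp hp t
      have hb := dist_bound (P t) (hPin t) x y hx hy
      rw [hxe, hye] at hb
      obtain ⟨g0, g1, g2⟩ := hgrow t
      have h2 : (t : ℤ) + 2 ≤ 2 * ((P t 0 0 + P t 1 0) * (P t 0 1 + P t 1 1)) := by
        nlinarith [mul_nonneg (by linarith : (0:ℤ) ≤ P t 0 0 + P t 1 0 - 1)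
          (by linarith : (0:ℤ) ≤ P t 0 1 + P t 1 1 - 1)]
      have h2R : (t : ℝ) + 2 ≤ 2 * (((P t 0 0 : ℝ) + P t 1 0) * ((P t 0 1 : ℝ) + P t 1 1)) := by
        exact_mod_cast h2
      have c0R : (1:ℝ) ≤ (P t 0 0 : ℝ) + P t 1 0 := by exact_mod_cast g0
      have c1R : (1:ℝ) ≤ (P t 0 1 : ℝ) + P t 1 1 := by exact_mod_cast g1
      have hfin : (1:ℝ) / (((P t 0 0 : ℝ) + P t 1 0) * ((P t 0 1 : ℝ) + P t 1 1))
          ≤ 2 / ((t : ℝ) + 2) := by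
        rw [div_le_div_iff₀ (by nlinarith) (by positivity)]
        nlinarith
      linarith
    have hq0 : q 0 = p 0 := by
      by_contra hne0
      have hpos : 0 < |q 0 - p 0| := abs_pos.mpr (sub_ne_zero.mpr hne0)
      obtain ⟨t, ht⟩ := exists_nat_gt (2 / |q 0 - p 0|)
      have hb := hd0 t
      have h3 : 2 / ((t : ℝ) + 2) < |q 0 - p 0| := by
        rw [div_lt_iff₀ (by positivity)]
        have h4 : 2 / |q 0 - p 0| * |q 0 - p 0| = 2 := div_mul_cancel₀ 2 (ne_of_gt hpos)
        nlinarith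
      linarith
    have hqs := (mem_simplex_iff q).mp (simg_subset_simplex _ (hPin 0) (Set.mem_iInter.mp hq 0))
    have hps := (mem_simplex_iff p).mp (simg_subset_simplex _ (hPin 0) (Set.mem_iInter.mp hp 0))
    funext i
    rcases fin2_cases i with rfl | rfl
    · exact hq0
    · have e1 := hqs.2
      have e2 := hps.2
      linarith
  ext z
  simp only [Set.mem_singleton_iff]
  exact ⟨fun hz => key z hz, fun hz => hz ▸ hp⟩
end

section
/- The three pairs (M_0, M_1), (M_0, M_1F), (M_0F, M_1) are pairwise inequivalent under the action of S_2 × S_{n−1}: for no two distinct pairs (A_0, A_1), (A_0', A_1') among them does there exist a permutation matrix H fixing both e_0 and e_1 with (A_0', A_1') = (HA_0H^{−1}, HA_1H^{−1}) or (A_0', A_1') = (FHA_1H^{−1}F, FHA_0H^{−1}F). -/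
open Matrix

variable {n : ℕ}

lemma permMat_mul_apply (σ : Equiv.Perm (Fin (n + 1))) (A : MatZ n) (i j : Fin (n + 1)) :
    (permMat σ * A) i j = A (σ⁻¹ i) j := by
  rw [Matrix.mul_apply]
  rw [Finset.sum_eq_single (σ⁻¹ i)]
  · simp [permMat]
  · intro b _ hb
    have : i ≠ σ b := fun h => hb (by simp [h])
    simp [permMat, this]
  · simp

lemma mul_permMat_apply (A : MatZ n) (σ : Equiv.Perm (Fin (n + 1))) (i j : Fin (n + 1)) :
    (A * permMat σ) i j = A i (σ j) := by
  rw [Matrix.mul_apply]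
  rw [Finset.sum_eq_single (σ j)]
  · simp [permMat]
  · intro b _ hb; simp [permMat, hb]
  · simp

lemma Fmat_eq : Fmat n = permMat (Equiv.swap (0 : Fin (n + 1)) 1) := rfl

lemma Rmat_eq : Rmat n = permMat (finRotate (n + 1)) := by
  ext i j; simp [Rmat, permMat, finRotate_succ_apply]

lemma mul_Rmat_apply (A : MatZ n) (i j : Fin (n + 1)) :
    (A * Rmat n) i j = A i (j + 1) := by
  rw [Rmat_eq, mul_permMat_apply, finRotate_succ_apply]

lemma mul_Fmat_apply (A : MatZ n) (i j : Fin (n + 1)) :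
    (A * Fmat n) i j = A i (Equiv.swap 0 1 j) := by
  rw [Fmat_eq, mul_permMat_apply]

lemma Fmat_mul_apply (A : MatZ n) (i j : Fin (n + 1)) :
    (Fmat n * A) i j = A (Equiv.swap 0 1 i) j := by
  rw [Fmat_eq, permMat_mul_apply, Equiv.swap_inv]

lemma Nmat_mul_apply (h01 : (0 : Fin (n + 1)) ≠ 1) (A : MatZ n) (i j : Fin (n + 1)) :
    (Nmat n * A) i j = A i j + if i = 0 then A 1 j else 0 := by
  rw [Matrix.mul_apply]
  have : ∀ k, Nmat n i k * A k j =
      (if i = k then 1 else 0) * A k j + (if i = 0 ∧ k = 1 then 1 else 0) * A k j := by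
    intro k
    rcases eq_or_ne i k with rfl | h
    · have : ¬ (i = 0 ∧ i = 1) := fun ⟨a, b⟩ => h01 (a ▸ b)
      simp [Nmat, this]
    · simp [Nmat, h, and_comm]
  simp_rw [this]
  rw [Finset.sum_add_distrib]
  congr 1
  · rw [Finset.sum_eq_single i]
    · simp
    · intro b _ hb; simp [Ne.symm hb]
    · simp
  · rcases eq_or_ne i 0 with rfl | h
    · rw [Finset.sum_eq_single 1] <;> simp_all
    · simp [h]

lemma Lmat_mul_apply (h01 : (0 : Fin (n + 1)) ≠ 1) (A : MatZ n) (i j : Fin (n + 1)) :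
    (Lmat n * A) i j = A i j + if i = 1 then A 0 j else 0 := by
  have h : Lmat n * A = Fmat n * (Nmat n * (Fmat n * A)) := by
    rw [Lmat, mul_assoc, mul_assoc]
  rw [h, Fmat_mul_apply, Nmat_mul_apply h01, Fmat_mul_apply, Fmat_mul_apply,
    Equiv.swap_apply_self, Equiv.swap_apply_right]
  have : Equiv.swap (0 : Fin (n+1)) 1 i = 0 ↔ i = 1 := by
    rw [Equiv.swap_apply_eq_iff, Equiv.swap_apply_left]
  rw [if_congr this rfl rfl]

def tauInv {n : ℕ} (A : MatZ n) : ℤ := A 0 0 + A 1 1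
def cval (n : ℕ) : ℤ := if (0 : Fin (n + 1)) = 1 + 1 then 1 else 0

lemma tau_Mon0 (h01 : (0 : Fin (n + 1)) ≠ 1) : tauInv (Mon0 n) = 1 + cval n := by
  have h : Mon0 n = Nmat n * (Fmat n * Rmat n) := by rw [Mon0, mul_assoc]
  rw [tauInv, h, Nmat_mul_apply h01, Nmat_mul_apply h01]
  rw [Fmat_mul_apply, Fmat_mul_apply, Fmat_mul_apply]
  simp only [Rmat, Matrix.of_apply, Equiv.swap_apply_left, Equiv.swap_apply_right,
    if_pos rfl, if_neg h01.symm, zero_add]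
  simp [h01, cval]

lemma tau_Mon1 (h01 : (0 : Fin (n + 1)) ≠ 1) : tauInv (Mon1 n) = cval n := by
  have h12 : (1 : Fin (n + 1)) ≠ 1 + 1 := by
    intro h; exact h01 ((left_eq_add.mp h).symm)
  rw [tauInv, Mon1, Lmat_mul_apply h01, Lmat_mul_apply h01]
  simp only [Rmat, Matrix.of_apply, if_neg h01.symm, if_pos rfl, if_neg h12]
  simp [h01, cval]

lemma tau_Mon0F (h01 : (0 : Fin (n + 1)) ≠ 1) : tauInv (Mon0 n * Fmat n) = cval n := by
  have h12 : (1 : Fin (n + 1)) ≠ 1 + 1 := by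
    intro h; exact h01 ((left_eq_add.mp h).symm)
  have h : Mon0 n * Fmat n = Nmat n * (Fmat n * Rmat n) * Fmat n := by
    rw [Mon0, mul_assoc (Nmat n) (Fmat n) (Rmat n)]
  rw [tauInv, h, mul_Fmat_apply, mul_Fmat_apply, Equiv.swap_apply_left, Equiv.swap_apply_right]
  rw [Nmat_mul_apply h01, Nmat_mul_apply h01]
  rw [Fmat_mul_apply, Fmat_mul_apply, Fmat_mul_apply]
  simp only [Rmat, Matrix.of_apply, Equiv.swap_apply_left, Equiv.swap_apply_right,
    if_pos rfl, if_neg h01.symm, if_neg h12, zero_add]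
  simp [h01, cval]

lemma tau_Mon1F (h01 : (0 : Fin (n + 1)) ≠ 1) : tauInv (Mon1 n * Fmat n) = 1 + cval n := by
  rw [tauInv, mul_Fmat_apply, mul_Fmat_apply, Equiv.swap_apply_left, Equiv.swap_apply_right]
  rw [Mon1, Lmat_mul_apply h01, Lmat_mul_apply h01]
  simp only [Rmat, Matrix.of_apply, if_pos rfl, if_neg h01.symm, zero_add]
  simp [h01, cval, add_comm]

lemma conj_apply (σ : Equiv.Perm (Fin (n + 1))) (A : MatZ n) (i j : Fin (n + 1)) :
    (permMat σ * A * permMat σ⁻¹) i j = A (σ⁻¹ i) (σ⁻¹ j) := by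
  rw [mul_permMat_apply, permMat_mul_apply]

lemma tau_conj (σ : Equiv.Perm (Fin (n + 1))) (h0' : σ⁻¹ 0 = 0) (h1' : σ⁻¹ 1 = 1)
    (A : MatZ n) : tauInv (permMat σ * A * permMat σ⁻¹) = tauInv A := by
  rw [tauInv, conj_apply, conj_apply, h0', h1', tauInv]

lemma tau_Fconj (A : MatZ n) : tauInv (Fmat n * A * Fmat n) = tauInv A := by
  rw [tauInv, mul_Fmat_apply, mul_Fmat_apply, Fmat_mul_apply, Fmat_mul_apply,
    Equiv.swap_apply_left, Equiv.swap_apply_right, tauInv, add_comm]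

theorem stmt5 (n : ℕ) (hn : 1 ≤ n) (p q : MatZ n × MatZ n)
    (hp : p = (Mon0 n, Mon1 n) ∨ p = (Mon0 n, Mon1 n * Fmat n) ∨ p = (Mon0 n * Fmat n, Mon1 n))
    (hq : q = (Mon0 n, Mon1 n) ∨ q = (Mon0 n, Mon1 n * Fmat n) ∨ q = (Mon0 n * Fmat n, Mon1 n))
    (hpq : p ≠ q)
    (σ : Equiv.Perm (Fin (n + 1))) (h0 : σ 0 = 0) (h1 : σ 1 = 1) :
    q ≠ (permMat σ * p.1 * permMat σ⁻¹, permMat σ * p.2 * permMat σ⁻¹) ∧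
    q ≠ (Fmat n * (permMat σ * p.2 * permMat σ⁻¹) * Fmat n,
         Fmat n * (permMat σ * p.1 * permMat σ⁻¹) * Fmat n) := by
  have h01 : (0 : Fin (n + 1)) ≠ 1 := by
    have hv1 : (1 : Fin (n + 1)).val = 1 := by
      rw [Fin.val_one']; exact Nat.mod_eq_of_lt (by omega)
    intro h
    have h2 := congrArg Fin.val h
    rw [Fin.val_zero, hv1] at h2
    exact one_ne_zero h2.symm
  have h0' : σ⁻¹ 0 = 0 := Equiv.Perm.inv_eq_iff_eq.mpr h0.symm
  have h1' : σ⁻¹ 1 = 1 := Equiv.Perm.inv_eq_iff_eq.mpr h1.symm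
  have t0 := tau_Mon0 h01
  have t1 := tau_Mon1 h01
  have t2 := tau_Mon0F h01
  have t3 := tau_Mon1F h01
  constructor
  · intro h
    have e1 : tauInv q.1 = tauInv p.1 := by
      rw [h]; exact tau_conj σ h0' h1' p.1
    have e2 : tauInv q.2 = tauInv p.2 := by
      rw [h]; exact tau_conj σ h0' h1' p.2
    rcases hp with rfl | rfl | rfl <;> rcases hq with rfl | rfl | rfl <;>
      first
        | (simp only [t0, t1, t2, t3] at e1 e2 ⊢; omega)
        | exact hpq rfl
  · intro h
    have k1 : tauInv (Fmat n * (permMat σ * p.2 * permMat σ⁻¹) * Fmat n) = tauInv p.2 := by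
      rw [tau_Fconj, tau_conj σ h0' h1']
    have k2 : tauInv (Fmat n * (permMat σ * p.1 * permMat σ⁻¹) * Fmat n) = tauInv p.1 := by
      rw [tau_Fconj, tau_conj σ h0' h1']
    have e1 : tauInv q.1 = tauInv p.2 := by rw [h]; exact k1
    have e2 : tauInv q.2 = tauInv p.1 := by rw [h]; exact k2
    rcases hp with rfl | rfl | rfl <;> rcases hq with rfl | rfl | rfl <;>
      first
        | (simp only [t0, t1, t2, t3] at e1 e2 ⊢; omega)
        | exact hpq rfl
end

section
/- The Mönkemeyer matrices M_0 and M_1 have identical columns in positions 1,…,n (that is, M_0 e_i = M_1 e_i for every i ≠ 0). Consequently, for every x ∈ M_0[Δ] ∩ M_1[Δ] one has M_0^{−1}x/‖M_0^{−1}x‖₁ = M_1^{−1}x/‖M_1^{−1}x‖₁, and the Gauss-type map G : Δ → Δ defined by G(x) = M_a^{−1}x/‖M_a^{−1}x‖₁ for x ∈ M_a[Δ] (a ∈ {0,1}) is well defined and continuous on Δ. -/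
open Matrix

/-! ### Auxiliary material -/


namespace Monk

variable {n : ℕ}

lemma fin_zero_ne_one (hn : 1 ≤ n) : (0 : Fin (n+1)) ≠ 1 := by
  simp [Fin.ext_iff, Nat.one_mod_eq_one.mpr (by omega : (n+1) ≠ 1)]

lemma last_add_one : Fin.last n + 1 = 0 := by
  simp [Fin.ext_iff, Fin.add_def]

lemma add_one_eq_zero_iff {j : Fin (n+1)} : j + 1 = 0 ↔ j = Fin.last n := by
  constructor
  · intro h
    have h2 : j + 1 = Fin.last n + 1 := by rw [h, last_add_one]
    exact add_right_cancel h2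
  · rintro rfl; exact last_add_one

lemma add_one_eq_one_iff {j : Fin (n+1)} : j + 1 = 1 ↔ j = 0 := by
  constructor
  · intro h
    have h2 : j + 1 = 0 + 1 := by rw [h, zero_add]
    exact add_right_cancel h2
  · rintro rfl; rw [zero_add]

lemma zero_sub_one : (0 : Fin (n+1)) - 1 = Fin.last n := by
  rw [sub_eq_iff_eq_add]; exact last_add_one.symm

lemma last_ne_zero (hn : 1 ≤ n) : (Fin.last n : Fin (n+1)) ≠ 0 := by
  simp [Fin.ext_iff]; omega

/-- Row sums against the matrix `N`. -/
lemma nrow (hn : 1 ≤ n) (k : Fin (n+1)) (v : Fin (n+1) → ℝ) :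
    ∑ m, ((Nmat n k m : ℤ) : ℝ) * v m = if k = 0 then v 0 + v 1 else v k := by
  have h01 := fin_zero_ne_one hn
  have key : ∀ m, ((Nmat n k m : ℤ) : ℝ) * v m
      = (if m = k then v m else 0) + (if m = 1 ∧ k = 0 then v m else 0) := by
    intro m
    by_cases hkm : m = k <;> by_cases h2 : m = 1 ∧ k = 0
    · exact absurd (by rw [← h2.2, ← hkm, h2.1] : (0:Fin (n+1)) = 1) h01
    · subst hkm
      have h2' : ¬(m = 1 ∧ m = 0) := h2
      simp [Nmat, h2']
    · obtain ⟨hm1, hk0⟩ := h2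
      have hnkm : ¬ (k = m) := fun h => hkm h.symm
      subst hm1; subst hk0
      simp only [Nmat, Matrix.of_apply, if_neg hnkm]
      norm_num
      omega
    · have hnkm : ¬ (k = m) := fun h => hkm h.symm
      simp only [Nmat, Matrix.of_apply, if_neg hnkm, if_neg h2]
      simp [hkm]
  rw [Finset.sum_congr rfl (fun m _ => key m), Finset.sum_add_distrib]
  rw [Finset.sum_ite_eq' Finset.univ k v]
  have : ∑ m, (if m = 1 ∧ k = 0 then v m else 0) = if k = 0 then v 1 else 0 := by
    by_cases hk : k = 0 <;> simp [hk]
  rw [this]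
  by_cases hk : k = 0 <;> simp [hk]

lemma mulR_apply (A : MatZ n) (k j : Fin (n+1)) :
    (A * Rmat n) k j = A k (j + 1) := by
  simp [Matrix.mul_apply, Rmat, mul_ite, mul_one, mul_zero]

lemma mulF_apply (A : MatZ n) (k j : Fin (n+1)) :
    (A * Fmat n) k j = A k (Equiv.swap 0 1 j) := by
  simp [Matrix.mul_apply, Fmat, mul_ite, mul_one, mul_zero]

lemma FN_apply (k b : Fin (n+1)) :
    (Fmat n * Nmat n) k b = Nmat n (Equiv.swap 0 1 k) b := by
  rw [Matrix.mul_apply, Finset.sum_eq_single (Equiv.swap 0 1 k)]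
  · simp [Fmat]
  · intro a _ ha
    have : k ≠ Equiv.swap 0 1 a := by
      intro h; exact ha (by rw [h, Equiv.swap_apply_self])
    simp [Fmat, this]
  · simp

lemma mon0_apply (k j : Fin (n+1)) :
    Mon0 n k j = Nmat n k (Equiv.swap 0 1 (j + 1)) := by
  rw [Mon0, mulR_apply, mulF_apply]

lemma mon1_apply (k j : Fin (n+1)) :
    Mon1 n k j = Nmat n (Equiv.swap 0 1 k) (Equiv.swap 0 1 (j + 1)) := by
  rw [Mon1, Lmat, mulR_apply, mulF_apply, FN_apply]

noncomputable def V0 (n : ℕ) (y : Fin (n+1) → ℝ) : Fin (n+1) → ℝ := fun k =>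
  if k = 0 then y 0 + y (Fin.last n) else y (Equiv.swap (0 : Fin (n+1)) 1 k - 1)

noncomputable def V1 (n : ℕ) (y : Fin (n+1) → ℝ) : Fin (n+1) → ℝ := fun k =>
  if k = 1 then y 0 + y (Fin.last n) else y (k - 1)

lemma row_reindex (hn : 1 ≤ n) (k : Fin (n+1)) (y : Fin (n+1) → ℝ) :
    ∑ j, ((Nmat n k (Equiv.swap 0 1 (j + 1)) : ℤ) : ℝ) * y j
      = if k = 0 then y 0 + y (Fin.last n) else y (Equiv.swap (0 : Fin (n+1)) 1 k - 1) := by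
  set E : Equiv.Perm (Fin (n+1)) := (Equiv.addRight 1).trans (Equiv.swap 0 1) with hE
  have h1 : ∑ j, ((Nmat n k (Equiv.swap 0 1 (j + 1)) : ℤ) : ℝ) * y j
      = ∑ m, ((Nmat n k m : ℤ) : ℝ) * y (E.symm m) := by
    rw [← Equiv.sum_comp E (fun m => ((Nmat n k m : ℤ) : ℝ) * y (E.symm m))]
    apply Finset.sum_congr rfl
    intro j _
    simp [hE, Equiv.addRight]
  rw [h1, nrow hn]
  have hsymm : ∀ m, E.symm m = Equiv.swap (0 : Fin (n+1)) 1 m - 1 := by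
    intro m; simp [hE, Equiv.addRight, Equiv.subRight, sub_eq_add_neg]
  by_cases hk : k = 0
  · simp only [hk, if_pos rfl]
    rw [hsymm, hsymm]
    rw [Equiv.swap_apply_left, Equiv.swap_apply_right, zero_sub_one, sub_self]
  · rw [if_neg hk, if_neg hk, hsymm]

lemma toR_mulVec_apply (A : MatZ n) (y : Fin (n+1) → ℝ) (k : Fin (n+1)) :
    (toR A *ᵥ y) k = ∑ j, ((A k j : ℤ) : ℝ) * y j := by
  simp [toR, Matrix.mulVec, dotProduct, Matrix.map_apply]

lemma mon0_mulVec (hn : 1 ≤ n) (y : Fin (n+1) → ℝ) :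
    toR (Mon0 n) *ᵥ y = V0 n y := by
  funext k
  rw [toR_mulVec_apply, V0]
  rw [Finset.sum_congr rfl (fun j _ => by rw [mon0_apply])]
  exact row_reindex hn k y

lemma mon1_mulVec (hn : 1 ≤ n) (y : Fin (n+1) → ℝ) :
    toR (Mon1 n) *ᵥ y = V1 n y := by
  funext k
  rw [toR_mulVec_apply, V1]
  rw [Finset.sum_congr rfl (fun j _ => by rw [mon1_apply])]
  rw [row_reindex hn (Equiv.swap 0 1 k) y]
  have h1 : Equiv.swap (0 : Fin (n+1)) 1 k = 0 ↔ k = 1 := by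
    constructor
    · intro h
      have h2 := congrArg (Equiv.swap (0 : Fin (n+1)) 1) h
      rwa [Equiv.swap_apply_self, Equiv.swap_apply_left] at h2
    · rintro rfl; exact Equiv.swap_apply_right 0 1
  by_cases hk : k = 1
  · rw [if_pos (h1.mpr hk), if_pos hk]
  · rw [if_neg (fun h => hk (h1.mp h)), if_neg hk, Equiv.swap_apply_self]

lemma sum_V0 (y : Fin (n+1) → ℝ) :
    ∑ k, V0 n y k = (∑ k, y k) + y (Fin.last n) := by
  have key : ∀ k, V0 n y k
      = y (Equiv.swap (0 : Fin (n+1)) 1 k - 1) + (if k = 0 then y (Fin.last n) else 0) := by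
    intro k
    by_cases hk : k = 0
    · subst hk
      simp [V0, Equiv.swap_apply_left, sub_self]
    · simp [V0, hk]
  rw [Finset.sum_congr rfl (fun k _ => key k), Finset.sum_add_distrib]
  congr 1
  · set E : Equiv.Perm (Fin (n+1)) := (Equiv.swap 0 1).trans (Equiv.subRight 1) with hE
    rw [← Equiv.sum_comp E y]
    apply Finset.sum_congr rfl
    intro j _
    simp [hE, Equiv.subRight]
  · simp

lemma sum_V1 (y : Fin (n+1) → ℝ) :
    ∑ k, V1 n y k = (∑ k, y k) + y (Fin.last n) := by
  have key : ∀ k, V1 n y k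
      = y (k - 1) + (if k = 1 then y (Fin.last n) else 0) := by
    intro k
    by_cases hk : k = 1
    · subst hk
      simp [V1, sub_self]
    · simp [V1, hk]
  rw [Finset.sum_congr rfl (fun k _ => key k), Finset.sum_add_distrib]
  congr 1
  · rw [← Equiv.sum_comp (Equiv.subRight (1 : Fin (n+1))) y]
    apply Finset.sum_congr rfl
    intro j _
    simp [Equiv.subRight]
  · simp

end Monk

namespace Monk

variable {n : ℕ}

noncomputable def NinvR (n : ℕ) : Matrix (Fin (n+1)) (Fin (n+1)) ℝ :=
  Matrix.of fun i j => if i = j then 1 else if j = 1 ∧ i = 0 then -1 else 0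

noncomputable def RinvR (n : ℕ) : Matrix (Fin (n+1)) (Fin (n+1)) ℝ :=
  Matrix.of fun i j => if i = j - 1 then 1 else 0

lemma ninv_mulVec (hn : 1 ≤ n) (v : Fin (n+1) → ℝ) :
    NinvR n *ᵥ v = fun k => if k = 0 then v 0 - v 1 else v k := by
  have h01 := fin_zero_ne_one hn
  funext k
  show ∑ m, NinvR n k m * v m = _
  have key : ∀ m, NinvR n k m * v m
      = (if m = k then v m else 0) + (if m = 1 ∧ k = 0 then -v m else 0) := by
    intro m
    by_cases hkm : m = k <;> by_cases h2 : m = 1 ∧ k = 0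
    · exact absurd (by rw [← h2.2, ← hkm, h2.1] : (0:Fin (n+1)) = 1) h01
    · subst hkm
      have h2' : ¬(m = 1 ∧ m = 0) := h2
      simp [NinvR, h2']
    · obtain ⟨hm1, hk0⟩ := h2
      have hnkm : ¬ (k = m) := fun h => hkm h.symm
      subst hm1; subst hk0
      simp only [NinvR, Matrix.of_apply, if_neg hnkm]
      norm_num
      omega
    · have hnkm : ¬ (k = m) := fun h => hkm h.symm
      simp only [NinvR, Matrix.of_apply, if_neg hnkm, if_neg h2]
      simp [hkm]
  rw [Finset.sum_congr rfl (fun m _ => key m), Finset.sum_add_distrib]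
  rw [Finset.sum_ite_eq' Finset.univ k v]
  have : ∑ m, (if m = 1 ∧ k = 0 then -v m else 0) = if k = 0 then -v 1 else 0 := by
    by_cases hk : k = 0 <;> simp [hk]
  rw [this]
  by_cases hk : k = 0 <;> simp [hk] <;> ring

lemma rinv_mulVec (v : Fin (n+1) → ℝ) :
    RinvR n *ᵥ v = fun k => v (k + 1) := by
  funext k
  show ∑ m, RinvR n k m * v m = _
  rw [Finset.sum_eq_single (k + 1)]
  · simp [RinvR, add_sub_cancel_right]
  · intro b _ hb
    have : ¬ (k = b - 1) := by
      intro h; exact hb (by rw [h, sub_add_cancel])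
    simp [RinvR, this]
  · simp

lemma fmatR_mulVec (v : Fin (n+1) → ℝ) :
    toR (Fmat n) *ᵥ v = fun k => v (Equiv.swap 0 1 k) := by
  funext k
  rw [toR_mulVec_apply]
  rw [Finset.sum_eq_single (Equiv.swap (0 : Fin (n+1)) 1 k)]
  · simp [Fmat]
  · intro b _ hb
    have : k ≠ Equiv.swap 0 1 b := by
      intro h; exact hb (by rw [h, Equiv.swap_apply_self])
    simp [Fmat, this]
  · simp

noncomputable def M0inv (n : ℕ) : Matrix (Fin (n+1)) (Fin (n+1)) ℝ :=
  RinvR n * (toR (Fmat n) * NinvR n)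

noncomputable def M1inv (n : ℕ) : Matrix (Fin (n+1)) (Fin (n+1)) ℝ :=
  RinvR n * (toR (Fmat n) * (NinvR n * toR (Fmat n)))

lemma eq_one_of_mulVec_id {A : Matrix (Fin (n+1)) (Fin (n+1)) ℝ}
    (h : ∀ v, A *ᵥ v = v) : A = 1 := by
  apply Matrix.ext
  intro i j
  have hh := congrFun (h (Pi.single j 1)) i
  rw [Matrix.mulVec_single] at hh
  simp only [Pi.smul_apply, Matrix.col_apply, op_smul_eq_mul, MulOpposite.op_one, one_smul, mul_one] at hh
  rw [hh, Matrix.one_apply, Pi.single_apply]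

lemma mon0_mul_inv (hn : 1 ≤ n) : toR (Mon0 n) * M0inv n = 1 := by
  have h01 := fin_zero_ne_one hn
  apply eq_one_of_mulVec_id
  intro v
  rw [← Matrix.mulVec_mulVec, M0inv, ← Matrix.mulVec_mulVec, ← Matrix.mulVec_mulVec]
  rw [ninv_mulVec hn, fmatR_mulVec, rinv_mulVec, mon0_mulVec hn]
  funext k
  simp only [V0]
  by_cases hk : k = 0
  · subst hk
    rw [if_pos rfl, zero_add, last_add_one, Equiv.swap_apply_right, Equiv.swap_apply_left]
    rw [if_pos rfl, if_neg (fun h => h01 h.symm)]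
    ring
  · rw [if_neg hk, sub_add_cancel, Equiv.swap_apply_self, if_neg hk]

lemma mon1_mul_inv (hn : 1 ≤ n) : toR (Mon1 n) * M1inv n = 1 := by
  have h01 := fin_zero_ne_one hn
  apply eq_one_of_mulVec_id
  intro v
  rw [← Matrix.mulVec_mulVec, M1inv, ← Matrix.mulVec_mulVec, ← Matrix.mulVec_mulVec,
    ← Matrix.mulVec_mulVec]
  rw [fmatR_mulVec, ninv_mulVec hn, fmatR_mulVec, rinv_mulVec, mon1_mulVec hn]
  funext k
  simp only [V1]
  have hσ0 : ∀ m : Fin (n+1), Equiv.swap (0 : Fin (n+1)) 1 m = 0 ↔ m = 1 := by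
    intro m
    constructor
    · intro h
      have h2 := congrArg (Equiv.swap (0 : Fin (n+1)) 1) h
      rwa [Equiv.swap_apply_self, Equiv.swap_apply_left] at h2
    · rintro rfl; exact Equiv.swap_apply_right 0 1
  by_cases hk : k = 1
  · subst hk
    simp only [if_pos rfl, zero_add, last_add_one, Equiv.swap_apply_right,
      Equiv.swap_apply_left, Equiv.swap_apply_self]
    simp only [if_true]
    rw [if_neg (fun h : (1:Fin (n+1)) = 0 => h01 h.symm)]
    ring
  · rw [if_neg hk, sub_add_cancel]
    simp only [Equiv.swap_apply_self]
    rw [if_neg (fun h => hk ((hσ0 k).mp h))]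

end Monk

namespace Monk

variable {n : ℕ}

lemma mon0_det_unit (hn : 1 ≤ n) : IsUnit (toR (Mon0 n)).det :=
  IsUnit.of_mul_eq_one _ (by rw [← Matrix.det_mul, mon0_mul_inv hn, Matrix.det_one])

lemma mon1_det_unit (hn : 1 ≤ n) : IsUnit (toR (Mon1 n)).det :=
  IsUnit.of_mul_eq_one _ (by rw [← Matrix.det_mul, mon1_mul_inv hn, Matrix.det_one])

lemma mon0_inv_mul (hn : 1 ≤ n) : (toR (Mon0 n))⁻¹ * toR (Mon0 n) = 1 :=
  Matrix.nonsing_inv_mul _ (mon0_det_unit hn)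

lemma mon1_inv_mul (hn : 1 ≤ n) : (toR (Mon1 n))⁻¹ * toR (Mon1 n) = 1 :=
  Matrix.nonsing_inv_mul _ (mon1_det_unit hn)

lemma projAct_smul (A : Matrix (Fin (n+1)) (Fin (n+1)) ℝ) {c : ℝ} (hc : c ≠ 0)
    (v : Fin (n+1) → ℝ) : projAct A (c • v) = projAct A v := by
  unfold projAct
  rw [Matrix.mulVec_smul]
  have hs : ∑ i, (c • (A *ᵥ v)) i = c * ∑ i, (A *ᵥ v) i := by
    simp [Finset.mul_sum]
  rw [hs, smul_smul, _root_.mul_inv_rev, mul_assoc, inv_mul_cancel₀ hc, mul_one]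

lemma mem_stdSimplex_iff' (y : Fin (n+1) → ℝ) :
    y ∈ stdSimplex ℝ (Fin (n+1)) ↔ (∀ i, 0 ≤ y i) ∧ ∑ i, y i = 1 := Iff.rfl

lemma sum_mon0_mulVec (hn : 1 ≤ n) {y : Fin (n+1) → ℝ}
    (hy : y ∈ stdSimplex ℝ (Fin (n+1))) :
    ∑ i, (toR (Mon0 n) *ᵥ y) i = 1 + y (Fin.last n) := by
  rw [mon0_mulVec hn, sum_V0, hy.2]

lemma sum_mon1_mulVec (hn : 1 ≤ n) {y : Fin (n+1) → ℝ}
    (hy : y ∈ stdSimplex ℝ (Fin (n+1))) :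
    ∑ i, (toR (Mon1 n) *ᵥ y) i = 1 + y (Fin.last n) := by
  rw [mon1_mulVec hn, sum_V1, hy.2]

lemma sum_mon0_pos (hn : 1 ≤ n) {y : Fin (n+1) → ℝ}
    (hy : y ∈ stdSimplex ℝ (Fin (n+1))) : 0 < ∑ i, (toR (Mon0 n) *ᵥ y) i := by
  rw [sum_mon0_mulVec hn hy]
  have := hy.1 (Fin.last n); linarith

lemma sum_mon1_pos (hn : 1 ≤ n) {y : Fin (n+1) → ℝ}
    (hy : y ∈ stdSimplex ℝ (Fin (n+1))) : 0 < ∑ i, (toR (Mon1 n) *ᵥ y) i := by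
  rw [sum_mon1_mulVec hn hy]
  have := hy.1 (Fin.last n); linarith

lemma proj_inv_left0 (hn : 1 ≤ n) {y : Fin (n+1) → ℝ}
    (hy : y ∈ stdSimplex ℝ (Fin (n+1))) :
    projAct (toR (Mon0 n))⁻¹ (projAct (toR (Mon0 n)) y) = y := by
  have hspos := sum_mon0_pos hn hy
  show projAct (toR (Mon0 n))⁻¹
    ((∑ i, (toR (Mon0 n) *ᵥ y) i)⁻¹ • (toR (Mon0 n) *ᵥ y)) = y
  rw [projAct_smul _ (inv_ne_zero hspos.ne') _]
  unfold projAct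
  rw [Matrix.mulVec_mulVec, mon0_inv_mul hn, Matrix.one_mulVec, hy.2]
  norm_num

lemma proj_inv_left1 (hn : 1 ≤ n) {y : Fin (n+1) → ℝ}
    (hy : y ∈ stdSimplex ℝ (Fin (n+1))) :
    projAct (toR (Mon1 n))⁻¹ (projAct (toR (Mon1 n)) y) = y := by
  have hspos := sum_mon1_pos hn hy
  show projAct (toR (Mon1 n))⁻¹
    ((∑ i, (toR (Mon1 n) *ᵥ y) i)⁻¹ • (toR (Mon1 n) *ᵥ y)) = y
  rw [projAct_smul _ (inv_ne_zero hspos.ne') _]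
  unfold projAct
  rw [Matrix.mulVec_mulVec, mon1_inv_mul hn, Matrix.one_mulVec, hy.2]
  norm_num

lemma proj_eq_unique (hn : 1 ≤ n) {y z : Fin (n+1) → ℝ}
    (hy : y ∈ stdSimplex ℝ (Fin (n+1))) (hz : z ∈ stdSimplex ℝ (Fin (n+1)))
    (h : projAct (toR (Mon0 n)) y = projAct (toR (Mon1 n)) z) : y = z := by
  have h01 := fin_zero_ne_one (n := n) hn
  set s : ℝ := 1 + y (Fin.last n) with hsdef
  set t : ℝ := 1 + z (Fin.last n) with htdef
  have hs : 0 < s := by have := hy.1 (Fin.last n); rw [hsdef]; linarith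
  have ht : 0 < t := by have := hz.1 (Fin.last n); rw [htdef]; linarith
  have h' : ∀ k, s⁻¹ * V0 n y k = t⁻¹ * V1 n z k := by
    intro k
    have hk := congrFun h k
    unfold projAct at hk
    rw [mon0_mulVec hn, mon1_mulVec hn, sum_V0, sum_V1, hy.2, hz.2] at hk
    simpa [hsdef, htdef] using hk
  have E0 := h' 0
  have E1 := h' 1
  have hv00 : V0 n y 0 = y 0 + y (Fin.last n) := if_pos rfl
  have hv10 : V1 n z 0 = z (Fin.last n) := by
    rw [V1, if_neg h01, zero_sub_one]
  have hv01 : V0 n y 1 = y (Fin.last n) := by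
    rw [V0, if_neg (fun hh => h01 hh.symm), Equiv.swap_apply_right, zero_sub_one]
  have hv11 : V1 n z 1 = z 0 + z (Fin.last n) := if_pos rfl
  rw [hv00, hv10] at E0
  rw [hv01, hv11] at E1
  have E0' : s⁻¹ * y 0 + s⁻¹ * y (Fin.last n) = t⁻¹ * z (Fin.last n) := by
    rw [← mul_add]; exact E0
  have E1' : s⁻¹ * y (Fin.last n) = t⁻¹ * z 0 + t⁻¹ * z (Fin.last n) := by
    rw [← mul_add]; exact E1
  have hsy0 : 0 ≤ s⁻¹ * y 0 := mul_nonneg (inv_pos.mpr hs).le (hy.1 0)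
  have htz0 : 0 ≤ t⁻¹ * z 0 := mul_nonneg (inv_pos.mpr ht).le (hz.1 0)
  have hzero : s⁻¹ * y 0 + t⁻¹ * z 0 = 0 := by linarith
  have hy0 : y 0 = 0 := by
    have : s⁻¹ * y 0 = 0 := by linarith
    exact (mul_eq_zero.mp this).resolve_left (inv_ne_zero hs.ne')
  have hz0 : z 0 = 0 := by
    have : t⁻¹ * z 0 = 0 := by linarith
    exact (mul_eq_zero.mp this).resolve_left (inv_ne_zero ht.ne')
  have key : ∀ j, s⁻¹ * y j = t⁻¹ * z j := by
    intro j
    by_cases hj0 : j = 0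
    · rw [hj0, hy0, hz0]; ring
    · by_cases hjl : j = Fin.last n
      · rw [hjl]; rw [hz0] at E1'; linarith
      · have hk0 : j + 1 ≠ 0 := fun hh => hjl (add_one_eq_zero_iff.mp hh)
        have hk1 : j + 1 ≠ 1 := fun hh => hj0 (add_one_eq_one_iff.mp hh)
        have hk := h' (j + 1)
        have hv0 : V0 n y (j + 1) = y j := by
          rw [V0, if_neg hk0, Equiv.swap_apply_of_ne_of_ne hk0 hk1, add_sub_cancel_right]
        have hv1 : V1 n z (j + 1) = z j := by
          rw [V1, if_neg hk1, add_sub_cancel_right]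
        rw [hv0, hv1] at hk
        exact hk
  have hsum : s⁻¹ = t⁻¹ := by
    have h1 : ∑ j, s⁻¹ * y j = ∑ j, t⁻¹ * z j :=
      Finset.sum_congr rfl (fun j _ => key j)
    rw [← Finset.mul_sum, ← Finset.mul_sum, hy.2, hz.2, mul_one, mul_one] at h1
    exact h1
  funext j
  have hj := key j
  rw [← hsum] at hj
  exact mul_left_cancel₀ (inv_ne_zero hs.ne') hj

end Monk

namespace Monk

variable {n : ℕ}

noncomputable def W0 (n : ℕ) (x : Fin (n+1) → ℝ) : Fin (n+1) → ℝ := fun j =>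
  if j = 0 then x 0 - x 1 else x (Equiv.swap (0:Fin (n+1)) 1 (j+1))

noncomputable def W1 (n : ℕ) (x : Fin (n+1) → ℝ) : Fin (n+1) → ℝ := fun j =>
  if j = 0 then x 1 - x 0 else x (j+1)

lemma swap_sub_one_ne_zero {k : Fin (n+1)} (hk : k ≠ 0) :
    Equiv.swap (0:Fin (n+1)) 1 k - 1 ≠ 0 := by
  intro h
  have h2 : Equiv.swap (0:Fin (n+1)) 1 k = 1 := by
    rw [sub_eq_iff_eq_add, zero_add] at h; exact h
  have h3 := congrArg (Equiv.swap (0:Fin (n+1)) 1) h2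
  rw [Equiv.swap_apply_self, Equiv.swap_apply_right] at h3
  exact hk h3

lemma sub_one_ne_zero_of_ne_one {k : Fin (n+1)} (hk : k ≠ 1) : k - 1 ≠ 0 := by
  intro h
  rw [sub_eq_iff_eq_add, zero_add] at h; exact hk h

lemma V0_W0 (hn : 1 ≤ n) (x : Fin (n+1) → ℝ) : V0 n (W0 n x) = x := by
  funext k
  rw [V0]
  by_cases hk : k = 0
  · subst hk
    rw [if_pos rfl]
    have hW0 : W0 n x 0 = x 0 - x 1 := if_pos rfl
    have hWl : W0 n x (Fin.last n) = x 1 := by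
      rw [W0]
      rw [if_neg (last_ne_zero hn), last_add_one, Equiv.swap_apply_left]
    rw [hW0, hWl]; ring
  · rw [if_neg hk]
    have h1 := swap_sub_one_ne_zero hk
    show W0 n x _ = x k
    rw [W0]
    rw [if_neg h1, sub_add_cancel, Equiv.swap_apply_self]

lemma V1_W1 (hn : 1 ≤ n) (x : Fin (n+1) → ℝ) : V1 n (W1 n x) = x := by
  have h01 := fin_zero_ne_one (n := n) hn
  funext k
  rw [V1]
  by_cases hk : k = 1
  · subst hk
    rw [if_pos rfl]
    have hW0 : W1 n x 0 = x 1 - x 0 := if_pos rfl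
    have hWl : W1 n x (Fin.last n) = x 0 := by
      rw [W1]
      rw [if_neg (last_ne_zero hn), last_add_one]
    rw [hW0, hWl]; ring
  · rw [if_neg hk]
    have h1 := sub_one_ne_zero_of_ne_one hk
    show W1 n x _ = x k
    rw [W1]
    rw [if_neg h1, sub_add_cancel]

lemma sum_W0 (x : Fin (n+1) → ℝ) :
    ∑ j, W0 n x j = (∑ j, x j) - x 1 := by
  have key : ∀ j, W0 n x j
      = x (Equiv.swap (0:Fin (n+1)) 1 (j+1)) + (if j = 0 then -x 1 else 0) := by
    intro j
    by_cases hj : j = 0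
    · subst hj
      simp only [W0, if_true, ite_true, eq_self_iff_true, zero_add, Equiv.swap_apply_right]
      ring
    · rw [W0]; simp [hj]
  rw [Finset.sum_congr rfl (fun j _ => key j), Finset.sum_add_distrib]
  have h1 : ∑ j, x (Equiv.swap (0:Fin (n+1)) 1 (j+1)) = ∑ j, x j := by
    rw [← Equiv.sum_comp ((Equiv.addRight (1 : Fin (n+1))).trans (Equiv.swap 0 1)) x]
    apply Finset.sum_congr rfl
    intro j _
    simp [Equiv.addRight]
  rw [h1]
  simp [sub_eq_add_neg]

lemma sum_W1 (x : Fin (n+1) → ℝ) :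
    ∑ j, W1 n x j = (∑ j, x j) - x 0 := by
  have key : ∀ j, W1 n x j = x (j+1) + (if j = 0 then -x 0 else 0) := by
    intro j
    by_cases hj : j = 0
    · subst hj
      simp only [W1, if_true, ite_true, eq_self_iff_true, zero_add]
      ring
    · rw [W1]; simp [hj]
  rw [Finset.sum_congr rfl (fun j _ => key j), Finset.sum_add_distrib]
  have h1 : ∑ j, x (j+1) = ∑ j, x j := by
    rw [← Equiv.sum_comp (Equiv.addRight (1 : Fin (n+1))) x]
    apply Finset.sum_congr rfl
    intro j _
    simp [Equiv.addRight]
  rw [h1]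
  simp [sub_eq_add_neg]

lemma pair_sum_le (hn : 1 ≤ n) {x : Fin (n+1) → ℝ}
    (hx : x ∈ stdSimplex ℝ (Fin (n+1))) : x 0 + x 1 ≤ 1 := by
  have h01 := fin_zero_ne_one (n := n) hn
  have hsub : ({0, 1} : Finset (Fin (n+1))) ⊆ Finset.univ := Finset.subset_univ _
  have h := Finset.sum_le_sum_of_subset_of_nonneg hsub (fun i _ _ => hx.1 i)
  rw [Finset.sum_pair h01, hx.2] at h
  exact h

lemma cover (hn : 1 ≤ n) {x : Fin (n+1) → ℝ} (hx : x ∈ stdSimplex ℝ (Fin (n+1))) :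
    x ∈ simg (Mon0 n) ∪ simg (Mon1 n) := by
  have hps := pair_sum_le hn hx
  by_cases hc : x 1 ≤ x 0
  · left
    have h1 : x 1 < 1 := by linarith
    set c : ℝ := (1 - x 1)⁻¹ with hcdef
    have hcpos : 0 < c := by rw [hcdef]; exact inv_pos.mpr (by linarith)
    refine ⟨c • W0 n x, ⟨?_, ?_⟩, ?_⟩
    · intro j
      by_cases hj : j = 0
      · subst hj
        have : W0 n x 0 = x 0 - x 1 := if_pos rfl
        simp only [Pi.smul_apply, smul_eq_mul, this]
        have : 0 ≤ x 0 - x 1 := by linarith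
        positivity
      · have hW : W0 n x j = x (Equiv.swap (0:Fin (n+1)) 1 (j+1)) := by
          rw [W0]; simp [hj]
        simp only [Pi.smul_apply, smul_eq_mul, hW]
        exact mul_nonneg hcpos.le (hx.1 _)
    · have : ∑ j, (c • W0 n x) j = c * ∑ j, W0 n x j := by
        simp [Finset.mul_sum]
      rw [this, sum_W0, hx.2, hcdef]
      rw [inv_mul_cancel₀ (by linarith : (1:ℝ) - x 1 ≠ 0)]
    · rw [projAct_smul _ hcpos.ne' _]
      unfold projAct
      rw [mon0_mulVec hn, V0_W0 hn, hx.2]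
      norm_num
  · right
    push_neg at hc
    have h1 : x 0 < 1 := by linarith
    set c : ℝ := (1 - x 0)⁻¹ with hcdef
    have hcpos : 0 < c := by rw [hcdef]; exact inv_pos.mpr (by linarith)
    refine ⟨c • W1 n x, ⟨?_, ?_⟩, ?_⟩
    · intro j
      by_cases hj : j = 0
      · subst hj
        have : W1 n x 0 = x 1 - x 0 := if_pos rfl
        simp only [Pi.smul_apply, smul_eq_mul, this]
        have : 0 ≤ x 1 - x 0 := by linarith
        positivity
      · have hW : W1 n x j = x (j+1) := by
          rw [W1]; simp [hj]
        simp only [Pi.smul_apply, smul_eq_mul, hW]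
        exact mul_nonneg hcpos.le (hx.1 _)
    · have : ∑ j, (c • W1 n x) j = c * ∑ j, W1 n x j := by
        simp [Finset.mul_sum]
      rw [this, sum_W1, hx.2, hcdef]
      rw [inv_mul_cancel₀ (by linarith : (1:ℝ) - x 0 ≠ 0)]
    · rw [projAct_smul _ hcpos.ne' _]
      unfold projAct
      rw [mon1_mulVec hn, V1_W1 hn, hx.2]
      norm_num

lemma continuous_mulVecR (A : Matrix (Fin (n+1)) (Fin (n+1)) ℝ) :
    Continuous (fun x => A *ᵥ x) := by
  apply continuous_pi
  intro i
  simp only [Matrix.mulVec, dotProduct]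
  exact continuous_finset_sum _ fun j _ => continuous_const.mul (continuous_apply j)

lemma continuous_sum_mulVecR (A : Matrix (Fin (n+1)) (Fin (n+1)) ℝ) :
    Continuous (fun x => ∑ i, (A *ᵥ x) i) :=
  continuous_finset_sum _ fun i _ => (continuous_apply i).comp (continuous_mulVecR A)

lemma continuousOn_projAct (A : Matrix (Fin (n+1)) (Fin (n+1)) ℝ) :
    ContinuousOn (projAct A) {x | ∑ i, (A *ᵥ x) i ≠ 0} := by
  unfold projAct
  apply ContinuousOn.fun_smul
  · exact ContinuousOn.inv₀ (continuous_sum_mulVecR A).continuousOn (fun x hx => hx)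
  · exact (continuous_mulVecR A).continuousOn

lemma isClosed_simg0 (hn : 1 ≤ n) : IsClosed (simg (Mon0 n)) := by
  have hcont : ContinuousOn (projAct (toR (Mon0 n))) (stdSimplex ℝ (Fin (n+1))) :=
    (continuousOn_projAct _).mono (fun y hy => (sum_mon0_pos hn hy).ne')
  exact ((isCompact_stdSimplex _ _).image_of_continuousOn hcont).isClosed

lemma isClosed_simg1 (hn : 1 ≤ n) : IsClosed (simg (Mon1 n)) := by
  have hcont : ContinuousOn (projAct (toR (Mon1 n))) (stdSimplex ℝ (Fin (n+1))) :=
    (continuousOn_projAct _).mono (fun y hy => (sum_mon1_pos hn hy).ne')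
  exact ((isCompact_stdSimplex _ _).image_of_continuousOn hcont).isClosed

lemma inv_mulVec_proj0 (hn : 1 ≤ n) {y : Fin (n+1) → ℝ}
    (hy : y ∈ stdSimplex ℝ (Fin (n+1))) :
    (toR (Mon0 n))⁻¹ *ᵥ (projAct (toR (Mon0 n)) y)
      = (∑ i, (toR (Mon0 n) *ᵥ y) i)⁻¹ • y := by
  show (toR (Mon0 n))⁻¹ *ᵥ ((∑ i, (toR (Mon0 n) *ᵥ y) i)⁻¹ • (toR (Mon0 n) *ᵥ y)) = _
  rw [Matrix.mulVec_smul, Matrix.mulVec_mulVec, mon0_inv_mul hn, Matrix.one_mulVec]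

lemma inv_mulVec_proj1 (hn : 1 ≤ n) {y : Fin (n+1) → ℝ}
    (hy : y ∈ stdSimplex ℝ (Fin (n+1))) :
    (toR (Mon1 n))⁻¹ *ᵥ (projAct (toR (Mon1 n)) y)
      = (∑ i, (toR (Mon1 n) *ᵥ y) i)⁻¹ • y := by
  show (toR (Mon1 n))⁻¹ *ᵥ ((∑ i, (toR (Mon1 n) *ᵥ y) i)⁻¹ • (toR (Mon1 n) *ᵥ y)) = _
  rw [Matrix.mulVec_smul, Matrix.mulVec_mulVec, mon1_inv_mul hn, Matrix.one_mulVec]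

lemma continuousOn_inv0 (hn : 1 ≤ n) :
    ContinuousOn (projAct (toR (Mon0 n))⁻¹) (simg (Mon0 n)) := by
  apply (continuousOn_projAct _).mono
  rintro x ⟨y, hy, rfl⟩
  have h := inv_mulVec_proj0 hn hy
  have hpos := sum_mon0_pos hn hy
  show ∑ i, ((toR (Mon0 n))⁻¹ *ᵥ projAct (toR (Mon0 n)) y) i ≠ 0
  rw [h]
  have : ∑ i, ((∑ i, (toR (Mon0 n) *ᵥ y) i)⁻¹ • y) i
      = (∑ i, (toR (Mon0 n) *ᵥ y) i)⁻¹ * ∑ i, y i := by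
    simp [Finset.mul_sum]
  rw [this, hy.2, mul_one]
  exact inv_ne_zero hpos.ne'

lemma continuousOn_inv1 (hn : 1 ≤ n) :
    ContinuousOn (projAct (toR (Mon1 n))⁻¹) (simg (Mon1 n)) := by
  apply (continuousOn_projAct _).mono
  rintro x ⟨y, hy, rfl⟩
  have h := inv_mulVec_proj1 hn hy
  have hpos := sum_mon1_pos hn hy
  show ∑ i, ((toR (Mon1 n))⁻¹ *ᵥ projAct (toR (Mon1 n)) y) i ≠ 0
  rw [h]
  have : ∑ i, ((∑ i, (toR (Mon1 n) *ᵥ y) i)⁻¹ • y) i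
      = (∑ i, (toR (Mon1 n) *ᵥ y) i)⁻¹ * ∑ i, y i := by
    simp [Finset.mul_sum]
  rw [this, hy.2, mul_one]
  exact inv_ne_zero hpos.ne'

end Monk

namespace Monk

variable {n : ℕ}

lemma nmat_swap_row (hn : 1 ≤ n) {m : Fin (n+1)} (hm : m ≠ 0) (k : Fin (n+1)) :
    Nmat n (Equiv.swap 0 1 k) m = Nmat n k m := by
  have h01 := fin_zero_ne_one (n := n) hn
  by_cases hk0 : k = 0
  · subst hk0
    rw [Equiv.swap_apply_left]
    by_cases hm1 : m = 1
    · subst hm1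
      simp [Nmat, h01, Ne.symm h01]
    · have a1 : ¬((1:Fin (n+1)) = m) := fun h => hm1 h.symm
      have a2 : ¬((0:Fin (n+1)) = m) := fun h => hm h.symm
      simp [Nmat, a1, a2, hm1]
  · by_cases hk1 : k = 1
    · subst hk1
      rw [Equiv.swap_apply_right]
      by_cases hm1 : m = 1
      · subst hm1
        simp [Nmat, h01, Ne.symm h01]
      · have a1 : ¬((1:Fin (n+1)) = m) := fun h => hm1 h.symm
        have a2 : ¬((0:Fin (n+1)) = m) := fun h => hm h.symm
        simp [Nmat, a1, a2, hm1]
    · rw [Equiv.swap_apply_of_ne_of_ne hk0 hk1]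

end Monk

theorem stmt6 (n : ℕ) (hn : 1 ≤ n) :
    (∀ i : Fin (n + 1), i ≠ 0 → (fun j => Mon0 n j i) = (fun j => Mon1 n j i)) ∧
    (∀ x ∈ simg (Mon0 n) ∩ simg (Mon1 n),
      projAct (toR (Mon0 n))⁻¹ x = projAct (toR (Mon1 n))⁻¹ x) ∧
    ∃ G : (Fin (n + 1) → ℝ) → (Fin (n + 1) → ℝ),
      ContinuousOn G (stdSimplex ℝ (Fin (n + 1))) ∧
      Set.MapsTo G (stdSimplex ℝ (Fin (n + 1))) (stdSimplex ℝ (Fin (n + 1))) ∧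
      (∀ x ∈ simg (Mon0 n), G x = projAct (toR (Mon0 n))⁻¹ x) ∧
      (∀ x ∈ simg (Mon1 n), G x = projAct (toR (Mon1 n))⁻¹ x) := by
  classical
  have part1 : ∀ i : Fin (n + 1), i ≠ 0 → (fun j => Mon0 n j i) = (fun j => Mon1 n j i) := by
    intro i hi
    funext k
    rw [Monk.mon0_apply, Monk.mon1_apply]
    have hm : Equiv.swap (0 : Fin (n+1)) 1 (i + 1) ≠ 0 := by
      intro h
      have h2 := congrArg (Equiv.swap (0 : Fin (n+1)) 1) h
      rw [Equiv.swap_apply_self, Equiv.swap_apply_left] at h2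
      exact hi (Monk.add_one_eq_one_iff.mp h2)
    exact (Monk.nmat_swap_row hn hm k).symm
  have part2 : ∀ x ∈ simg (Mon0 n) ∩ simg (Mon1 n),
      projAct (toR (Mon0 n))⁻¹ x = projAct (toR (Mon1 n))⁻¹ x := by
    rintro x ⟨⟨y, hy, hxy⟩, ⟨z, hz, hxz⟩⟩
    have hE : projAct (toR (Mon0 n)) y = projAct (toR (Mon1 n)) z := hxy.trans hxz.symm
    have hyz : y = z := Monk.proj_eq_unique hn hy hz hE
    calc projAct (toR (Mon0 n))⁻¹ x
        = projAct (toR (Mon0 n))⁻¹ (projAct (toR (Mon0 n)) y) := by rw [hxy]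
      _ = y := Monk.proj_inv_left0 hn hy
      _ = z := hyz
      _ = projAct (toR (Mon1 n))⁻¹ (projAct (toR (Mon1 n)) z) :=
          (Monk.proj_inv_left1 hn hz).symm
      _ = projAct (toR (Mon1 n))⁻¹ x := by rw [hxz]
  refine ⟨part1, part2, ?_⟩
  set G : (Fin (n + 1) → ℝ) → (Fin (n + 1) → ℝ) :=
    fun x => if x ∈ simg (Mon0 n) then projAct (toR (Mon0 n))⁻¹ x
      else projAct (toR (Mon1 n))⁻¹ x with hGdef
  have hG0 : ∀ x ∈ simg (Mon0 n), G x = projAct (toR (Mon0 n))⁻¹ x := by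
    intro x hx
    rw [hGdef]
    simp only [if_pos hx]
  have hG1 : ∀ x ∈ simg (Mon1 n), G x = projAct (toR (Mon1 n))⁻¹ x := by
    intro x hx
    by_cases h : x ∈ simg (Mon0 n)
    · rw [hGdef]
      simp only [if_pos h]
      exact part2 x ⟨h, hx⟩
    · rw [hGdef]
      simp only [if_neg h]
  have hcover : stdSimplex ℝ (Fin (n+1)) ⊆ simg (Mon0 n) ∪ simg (Mon1 n) :=
    fun x hx => Monk.cover hn hx
  refine ⟨G, ?_, ?_, hG0, hG1⟩
  · refine ContinuousOn.mono (s := simg (Mon0 n) ∪ simg (Mon1 n)) ?_ hcover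
    intro x hx
    rw [continuousWithinAt_union]
    constructor
    · by_cases hxA : x ∈ simg (Mon0 n)
      · exact ((Monk.continuousOn_inv0 hn) x hxA).congr (fun y hy => hG0 y hy) (hG0 x hxA)
      · apply continuousWithinAt_of_notMem_closure
        rwa [(Monk.isClosed_simg0 hn).closure_eq]
    · by_cases hxB : x ∈ simg (Mon1 n)
      · exact ((Monk.continuousOn_inv1 hn) x hxB).congr (fun y hy => hG1 y hy) (hG1 x hxB)
      · apply continuousWithinAt_of_notMem_closure
        rwa [(Monk.isClosed_simg1 hn).closure_eq]
  · intro x hx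
    rcases Monk.cover hn hx with h | h
    · rw [hG0 x h]
      obtain ⟨y, hy, rfl⟩ := h
      rw [Monk.proj_inv_left0 hn hy]
      exact hy
    · rw [hG1 x h]
      obtain ⟨y, hy, rfl⟩ := h
      rw [Monk.proj_inv_left1 hn hy]
      exact hy
end
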